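/- arXiv:1501.02321 — 6 statements merged into one kernel-verified Lean document; each statement's English description precedes it below -/
import Mathlib

section
/- Let G be a compact Hausdorff topological group with normalized Haar measure, and let π be a continuous unitary representation of G on a complex Hilbert space V. Let H be a finite-dimensional minimal nontrivial invariant closed subspace of V whose subrepresentation occurs with multiplicity one in π. Then for all v, w ∈ H and all v', w' ∈ V, ∫_G ⟨π(x)v, w⟩ · conj(⟨π(x)v', w'⟩) dx = ⟨v, v'⟩ · ⟨w', w⟩ / dim_ℂ H. -/
open MeasureTheory

local notation "⟪" x ", " y "⟫" => @inner ℂ _ _ x y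

/-- A submodule is invariant under a unitary representation. -/
def Invariant {G V : Type*} [Group G] [NormedAddCommGroup V] [InnerProductSpace ℂ V]
    (π : G →* (V ≃ₗᵢ[ℂ] V)) (H : Submodule ℂ V) : Prop :=
  ∀ (x : G) (v : V), v ∈ H → π x v ∈ H

/-- A closed submodule is a minimal nontrivial invariant closed subspace. -/
def MinimalInvariant {G V : Type*} [Group G] [NormedAddCommGroup V] [InnerProductSpace ℂ V]
    (π : G →* (V ≃ₗᵢ[ℂ] V)) (H : Submodule ℂ V) : Prop :=
  H ≠ ⊥ ∧ ∀ H' : Submodule ℂ V, IsClosed (H' : Set V) → Invariant π H' → H' ≤ H →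
    H' = ⊥ ∨ H' = H

/-- There is a `G`-equivariant unitary isomorphism between the invariant subspaces
`H` and `H'`. -/
def EquivariantUnitaryIso {G V : Type*} [Group G] [NormedAddCommGroup V]
    [InnerProductSpace ℂ V] (π : G →* (V ≃ₗᵢ[ℂ] V)) (H H' : Submodule ℂ V) : Prop :=
  ∃ U : H ≃ₗᵢ[ℂ] H', ∀ (x : G) (v w : H), (w : V) = π x (v : V) →
    ((U w : V)) = π x ((U v : V))

/-- The subrepresentation on the minimal invariant subspace `H` occurs with multiplicity one:
any minimal nontrivial invariant closed subspace equivariantly unitarily isomorphic to `H`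
coincides with `H`. -/
def MultiplicityOne {G V : Type*} [Group G] [NormedAddCommGroup V] [InnerProductSpace ℂ V]
    (π : G →* (V ≃ₗᵢ[ℂ] V)) (H : Submodule ℂ V) : Prop :=
  ∀ H' : Submodule ℂ V, IsClosed (H' : Set V) → Invariant π H' → MinimalInvariant π H' →
    EquivariantUnitaryIso π H H' → H' = H

set_option linter.unusedSectionVars false

namespace SchurAux

variable {G V : Type*} [Group G] [TopologicalSpace G] [IsTopologicalGroup G] [CompactSpace G]
    [T2Space G] [MeasurableSpace G] [BorelSpace G]
    (μ : Measure G) [μ.IsHaarMeasure] [IsProbabilityMeasure μ]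
    [NormedAddCommGroup V] [InnerProductSpace ℂ V] [CompleteSpace V]
    (π : G →* (V ≃ₗᵢ[ℂ] V))

lemma pi_mul (g x : G) (u : V) : π (g * x) u = π g (π x u) := by
  rw [map_mul]; rfl

lemma pi_inv_apply (g : G) (u : V) : π g⁻¹ (π g u) = u := by
  rw [← pi_mul, inv_mul_cancel, map_one]; rfl

variable (hcont : ∀ v : V, Continuous fun x => π x v)

section
include hcont

lemma contF (a b u : V) : Continuous fun x => ⟪π x b, u⟫ • π x a :=
  ((hcont b).inner continuous_const).smul (hcont a)

lemma intF (a b u : V) : Integrable (fun x => ⟪π x b, u⟫ • π x a) μ :=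
  (contF π hcont a b u).integrable_of_hasCompactSupport
    (HasCompactSupport.of_compactSpace _)

lemma intF' (a b u c : V) : Integrable (fun x => ⟪π x b, u⟫ * ⟪c, π x a⟫) μ :=
  (((hcont b).inner continuous_const).mul
    (continuous_const.inner (hcont a))).integrable_of_hasCompactSupport
    (HasCompactSupport.of_compactSpace _)

/-- The integrated "matrix coefficient" operator `u ↦ ∫ ⟪π x b, u⟫ • π x a`. -/
noncomputable def TopL (a b : V) : V →ₗ[ℂ] V where
  toFun u := ∫ x, ⟪π x b, u⟫ • π x a ∂μ
  map_add' u u' := by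
    simp_rw [inner_add_right, add_smul]
    exact integral_add (intF μ π hcont a b u) (intF μ π hcont a b u')
  map_smul' c u := by
    simp_rw [inner_smul_right, RingHom.id_apply, mul_smul]
    exact integral_smul c _

lemma TopL_apply (a b u : V) : TopL μ π hcont a b u = ∫ x, ⟪π x b, u⟫ • π x a ∂μ := rfl

lemma inner_TopL (a b u c : V) :
    ⟪c, TopL μ π hcont a b u⟫ = ∫ x, ⟪π x b, u⟫ * ⟪c, π x a⟫ ∂μ := by
  rw [TopL_apply, ← integral_inner (intF μ π hcont a b u) c]
  simp_rw [inner_smul_right]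

lemma TopL_inner (a b u c : V) :
    ⟪TopL μ π hcont a b u, c⟫ = ∫ x, ⟪u, π x b⟫ * ⟪π x a, c⟫ ∂μ := by
  rw [← inner_conj_symm, inner_TopL, ← integral_conj]
  simp_rw [map_mul, inner_conj_symm]

lemma TopL_adjoint (a b c u : V) :
    ⟪TopL μ π hcont b a c, u⟫ = ⟪c, TopL μ π hcont a b u⟫ := by
  rw [TopL_inner, inner_TopL]
  simp_rw [mul_comm]

lemma TopL_equivariant (a b : V) (g : G) (u : V) :
    TopL μ π hcont a b (π g u) = π g (TopL μ π hcont a b u) := by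
  have key : ∀ y : G, ⟪π (g * y) b, π g u⟫ • π (g * y) a
      = π g (⟪π y b, u⟫ • π y a) := by
    intro y
    rw [pi_mul, pi_mul, LinearIsometryEquiv.inner_map_map, LinearIsometryEquiv.map_smul]
  calc TopL μ π hcont a b (π g u)
      = ∫ y, ⟪π (g * y) b, π g u⟫ • π (g * y) a ∂μ :=
        (integral_mul_left_eq_self (fun x => ⟪π x b, π g u⟫ • π x a) g).symm
    _ = ∫ y, ((π g).toLinearIsometry.toContinuousLinearMap) (⟪π y b, u⟫ • π y a) ∂μ := by
        simp_rw [key]; rfl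
    _ = π g (TopL μ π hcont a b u) := by
        rw [ContinuousLinearMap.integral_comp_comm _ (intF μ π hcont a b u)]; rfl

end

variable (H : Submodule ℂ V)

lemma perp_invariant (hHinv : ∀ (x : G) (u : V), u ∈ H → π x u ∈ H)
    (g : G) (z : V) (hz : z ∈ Hᗮ) : π g z ∈ Hᗮ := by
  rw [Submodule.mem_orthogonal]
  intro h hh
  have : ⟪π g⁻¹ h, z⟫ = 0 := hz (π g⁻¹ h) (hHinv g⁻¹ h hh)
  calc ⟪h, π g z⟫ = ⟪π g (π g⁻¹ h), π g z⟫ := by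
        rw [← pi_mul, mul_inv_cancel, map_one]; rfl
    _ = 0 := by rw [LinearIsometryEquiv.inner_map_map, this]

section
variable [FiniteDimensional ℂ H]

/-- The orthogonal projection onto `H`, as a map `V → V`. -/
noncomputable def projH : V →L[ℂ] V := H.subtypeL.comp (H.orthogonalProjectionOnto)

lemma projH_mem (u : V) : projH H u ∈ H := (H.orthogonalProjectionOnto u).2

lemma projH_eq_self {u : V} (hu : u ∈ H) : projH H u = u :=
  Submodule.starProjection_eq_self_iff.mpr hu

lemma sub_projH_mem (u : V) : u - projH H u ∈ Hᗮ :=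
  Submodule.sub_starProjection_mem_orthogonal u

lemma projH_equivariant (hHinv : ∀ (x : G) (u : V), u ∈ H → π x u ∈ H)
    (g : G) (u : V) : projH H (π g u) = π g (projH H u) := by
  have h1 : π g (projH H u) ∈ H := hHinv g _ (projH_mem H u)
  have h2 : π g u - π g (projH H u) ∈ Hᗮ := by
    rw [← LinearIsometryEquiv.map_sub]
    exact perp_invariant π H hHinv g _ (sub_projH_mem H u)
  exact Submodule.eq_starProjection_of_mem_orthogonal h1 h2

end

/-- Schur's lemma for equivariant operators mapping into a minimal invariant subspace. -/
lemma schur_scalar [FiniteDimensional ℂ H] (hHinv : Invariant π H)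
    (hHmin : MinimalInvariant π H)
    (B : V →ₗ[ℂ] V) (hmem : ∀ u, B u ∈ H)
    (hequiv : ∀ (g : G), ∀ u ∈ H, B (π g u) = π g (B u)) :
    ∃ c : ℂ, ∀ a ∈ H, B a = c • a := by
  have hne : Nontrivial H := Submodule.nontrivial_iff_ne_bot.mpr hHmin.1
  set BH : Module.End ℂ H := B.restrict (fun u _ => hmem u) with hBH
  obtain ⟨c, hc⟩ := BH.exists_eigenvalue
  refine ⟨c, ?_⟩
  set E : Submodule ℂ V := (BH.eigenspace c).map H.subtype with hE
  have hEH : E ≤ H := Submodule.map_subtype_le _ _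
  have hEfin : FiniteDimensional ℂ E := Submodule.finiteDimensional_of_le hEH
  have hme : ∀ a : V, a ∈ E ↔ ∃ h : a ∈ H, B a = c • a := by
    intro a
    constructor
    · rintro ⟨p, hp, rfl⟩
      refine ⟨p.2, ?_⟩
      have := Module.End.mem_eigenspace_iff.mp hp
      have := congrArg (Subtype.val) this
      simpa [hBH, LinearMap.restrict_coe_apply] using this
    · rintro ⟨h, hBa⟩
      refine ⟨⟨a, h⟩, ?_, rfl⟩
      simp only [SetLike.mem_coe, Module.End.mem_eigenspace_iff]
      apply Subtype.ext
      simpa [hBH, LinearMap.restrict_coe_apply] using hBa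
  have hEinv : Invariant π E := by
    intro g a ha
    rw [hme] at ha ⊢
    obtain ⟨haH, hBa⟩ := ha
    exact ⟨hHinv g a haH, by rw [hequiv g a haH, hBa, LinearIsometryEquiv.map_smul]⟩
  have hEbot : E ≠ ⊥ := by
    obtain ⟨p, hp⟩ := hc.exists_hasEigenvector
    refine (Submodule.ne_bot_iff _).mpr ⟨(p : V), ⟨p, hp.1, rfl⟩, ?_⟩
    simpa using fun h => hp.2 (Subtype.ext h)
  have := hHmin.2 E E.closed_of_finiteDimensional hEinv hEH
  rcases this with h | h
  · exact absurd h hEbot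
  · intro a ha
    have : a ∈ E := h ▸ ha
    exact ((hme a).mp this).2

section
variable [FiniteDimensional ℂ H]
include hcont

lemma TopL_mem (hHinv : Invariant π H) {a : V} (ha : a ∈ H) (b u : V) :
    TopL μ π hcont a b u ∈ H := by
  have h1 : ∀ x, projH H (⟪π x b, u⟫ • π x a) = ⟪π x b, u⟫ • π x a := fun x =>
    projH_eq_self H (Submodule.smul_mem H _ (hHinv x a ha))
  have h2 : projH H (TopL μ π hcont a b u) = TopL μ π hcont a b u := by
    rw [TopL_apply, ← ContinuousLinearMap.integral_comp_comm _ (intF μ π hcont a b u)]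
    simp_rw [h1]
  rw [← h2]; exact projH_mem H _

lemma TopL_vanish_perp (hHinv : Invariant π H)
    (hHmin : MinimalInvariant π H) (hHmult : MultiplicityOne π H)
    {v : V} (hv : v ∈ H) (v' : V) {u : V} (hu : u ∈ Hᗮ) :
    TopL μ π hcont v v' u = 0 := by
  classical
  set T := TopL μ π hcont v v' with hT
  set R := TopL μ π hcont v' v with hR
  set Slin : V →ₗ[ℂ] V := R - (projH H).toLinearMap.comp R with hS
  have hSapp : ∀ a, Slin a = R a - projH H (R a) := fun a => rfl
  have hSperp : ∀ a, Slin a ∈ Hᗮ := fun a => by rw [hSapp]; exact sub_projH_mem H _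
  have hSequiv : ∀ (g : G) (a : V), Slin (π g a) = π g (Slin a) := by
    intro g a
    rw [hSapp, hSapp, hR, TopL_equivariant, projH_equivariant π H hHinv,
      ← LinearIsometryEquiv.map_sub]
  have hadj : ∀ (a : V), ∀ z ∈ Hᗮ, ⟪Slin a, z⟫ = ⟪a, T z⟫ := by
    intro a z hz
    rw [hSapp, inner_sub_left]
    have h0 : ⟪projH H (R a), z⟫ = 0 :=
      (Submodule.mem_orthogonal _ _).mp hz _ (projH_mem H _)
    rw [h0, sub_zero, hT, hR, TopL_adjoint]
  have hSz : ∀ a ∈ H, Slin a = 0 := by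
    by_contra hcon
    push_neg at hcon
    obtain ⟨a₀, ha₀H, ha₀⟩ := hcon
    set A : V →ₗ[ℂ] V := T.comp Slin with hA
    have hAmem : ∀ b, A b ∈ H := fun b =>
      TopL_mem μ π hcont H hHinv hv v' _
    have hAequiv : ∀ (g : G), ∀ b ∈ H, A (π g b) = π g (A b) := by
      intro g b _
      simp only [hA, LinearMap.comp_apply]
      rw [hSequiv, hT, TopL_equivariant]
    obtain ⟨c, hc⟩ := schur_scalar π H hHinv hHmin A hAmem hAequiv
    have hinner : ∀ a : V, ⟪a, A a⟫ = ⟪Slin a, Slin a⟫ := fun a =>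
      (hadj a (Slin a) (hSperp a)).symm
    have ha₀0 : a₀ ≠ 0 := fun h => ha₀ (by rw [h, map_zero])
    set r : ℝ := ‖Slin a₀‖ / ‖a₀‖ with hr
    have hrpos : 0 < r := div_pos (norm_pos_iff.mpr ha₀) (norm_pos_iff.mpr ha₀0)
    have hrC : ((r : ℝ) : ℂ) ≠ 0 := by
      exact_mod_cast ne_of_gt hrpos
    have h1 : ∀ a ∈ H, ((‖Slin a‖ : ℂ)) ^ 2 = c * ((‖a‖ : ℂ)) ^ 2 := by
      intro a haH
      have h2 : ⟪Slin a, Slin a⟫ = c * ⟪a, a⟫ := by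
        rw [← hinner a, hc a haH, inner_smul_right]
      rw [inner_self_eq_norm_sq_to_K, inner_self_eq_norm_sq_to_K] at h2
      exact_mod_cast h2
    have hc2 : c = ((r : ℂ)) ^ 2 := by
      have h2 := h1 a₀ ha₀H
      have hna : ((‖a₀‖ : ℂ)) ≠ 0 := by
        exact_mod_cast norm_ne_zero_iff.mpr ha₀0
      have h3 : ((r : ℂ)) = (‖Slin a₀‖ : ℂ) / (‖a₀‖ : ℂ) := by
        rw [hr]; push_cast; ring
      rw [h3, div_pow, eq_div_iff (pow_ne_zero 2 hna)]
      linear_combination -h2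
    have hnorm : ∀ a ∈ H, ‖Slin a‖ = r * ‖a‖ := by
      intro a haH
      have h2 := h1 a haH
      rw [hc2] at h2
      have h4 : ‖Slin a‖ ^ 2 = r ^ 2 * ‖a‖ ^ 2 := by exact_mod_cast h2
      have h3 : ‖Slin a‖ ^ 2 = (r * ‖a‖) ^ 2 := by rw [h4, mul_pow]
      calc ‖Slin a‖ = Real.sqrt (‖Slin a‖ ^ 2) := (Real.sqrt_sq (norm_nonneg _)).symm
        _ = Real.sqrt ((r * ‖a‖) ^ 2) := by rw [h3]
        _ = r * ‖a‖ := Real.sqrt_sq (by positivity)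
    have hinj : ∀ a ∈ H, Slin a = 0 → a = 0 := by
      intro a haH h0
      have hn := hnorm a haH
      rw [h0, norm_zero] at hn
      rcases mul_eq_zero.mp hn.symm with h | h
      · exact absurd h (ne_of_gt hrpos)
      · exact norm_eq_zero.mp h
    set H' : Submodule ℂ V := Submodule.map Slin H with hH'
    have hH'fin : FiniteDimensional ℂ H' := Module.Finite.map H Slin
    have hH'closed : IsClosed (H' : Set V) := H'.closed_of_finiteDimensional
    have hH'inv : Invariant π H' := by
      rintro g _ ⟨a, haH, rfl⟩
      exact ⟨π g a, hHinv g a haH, hSequiv g a⟩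
    have hH'bot : H' ≠ ⊥ :=
      (Submodule.ne_bot_iff _).mpr ⟨Slin a₀, ⟨a₀, ha₀H, rfl⟩, ha₀⟩
    have hH'min : MinimalInvariant π H' := by
      refine ⟨hH'bot, ?_⟩
      intro H'' hcl'' hinv'' hle''
      set N : Submodule ℂ V := H ⊓ Submodule.comap Slin H'' with hN
      have hNH : N ≤ H := inf_le_left
      have hNfin : FiniteDimensional ℂ N := Submodule.finiteDimensional_of_le hNH
      have hNcl : IsClosed (N : Set V) := N.closed_of_finiteDimensional
      have hNinv : Invariant π N := by
        intro g a ha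
        rw [hN, Submodule.mem_inf] at ha ⊢
        rw [Submodule.mem_comap] at ha ⊢
        exact ⟨hHinv g a ha.1, by rw [hSequiv]; exact hinv'' g _ ha.2⟩
      rcases hHmin.2 N hNcl hNinv hNH with h | h
      · left
        rw [Submodule.eq_bot_iff]
        intro x hx''
        obtain ⟨a, haH, rfl⟩ := hle'' hx''
        have haN : a ∈ N := Submodule.mem_inf.mpr ⟨haH, Submodule.mem_comap.mpr hx''⟩
        rw [h, Submodule.mem_bot] at haN
        rw [haN, map_zero]
      · right
        refine le_antisymm hle'' ?_
        rintro _ ⟨a, haH, rfl⟩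
        have haN : a ∈ N := h ▸ haH
        exact Submodule.mem_comap.mp (Submodule.mem_inf.mp haN).2
    set L0 : H →ₗ[ℂ] H' := Slin.restrict (fun x hx => ⟨x, hx, rfl⟩) with hL0
    set L : H →ₗ[ℂ] H' := ((r : ℂ))⁻¹ • L0 with hL
    have hLcoe : ∀ x : H, ((L x : H') : V) = ((r : ℂ))⁻¹ • Slin (x : V) := by
      intro x
      rw [hL]
      simp [hL0, LinearMap.restrict_coe_apply]
      rfl
    have hLinj : Function.Injective L := by
      intro x y hxy
      have hs : Slin (x : V) = Slin (y : V) := by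
        have h5 := congrArg (fun z : H' => (r : ℂ) • (z : V)) hxy
        simpa [hLcoe, smul_smul, mul_inv_cancel₀ hrC, one_smul] using h5
      have h6 : ((x : V) - y) = 0 := by
        refine hinj _ (Submodule.sub_mem H x.2 y.2) ?_
        rw [map_sub, hs, sub_self]
      exact Subtype.ext (sub_eq_zero.mp h6)
    have hLsurj : Function.Surjective L := by
      rintro ⟨_, a, haH, rfl⟩
      refine ⟨⟨(r : ℂ) • a, Submodule.smul_mem H _ haH⟩, ?_⟩
      apply Subtype.ext
      rw [hLcoe]
      show ((r:ℂ))⁻¹ • Slin ((r : ℂ) • a) = Slin a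
      rw [_root_.map_smul, smul_smul, inv_mul_cancel₀ hrC, one_smul]
    set e := LinearEquiv.ofBijective L ⟨hLinj, hLsurj⟩ with he
    have hecoe : ∀ x : H, ((e x : H') : V) = ((r : ℂ))⁻¹ • Slin (x : V) := fun x => hLcoe x
    have hnorme : ∀ x : H, ‖e x‖ = ‖x‖ := by
      intro x
      calc ‖e x‖ = ‖((e x : H') : V)‖ := rfl
        _ = ‖((r : ℂ))⁻¹‖ * ‖Slin (x : V)‖ := by rw [hecoe x, norm_smul]
        _ = r⁻¹ * (r * ‖(x : V)‖) := by
            rw [hnorm (x : V) x.2, norm_inv, Complex.norm_real, Real.norm_eq_abs,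
              abs_of_pos hrpos]
        _ = ‖x‖ := by
            rw [← mul_assoc, inv_mul_cancel₀ (ne_of_gt hrpos), one_mul]; rfl
    have hiso : EquivariantUnitaryIso π H H' := by
      refine ⟨⟨e, hnorme⟩, ?_⟩
      intro x a b hba
      show ((e b : H') : V) = π x ((e a : H') : V)
      rw [hecoe, hecoe, hba, hSequiv, ← LinearIsometryEquiv.map_smul]
    have hHH : H' = H := hHmult H' hH'closed hH'inv hH'min hiso
    have hmem' : Slin a₀ ∈ H := hHH ▸ (⟨a₀, ha₀H, rfl⟩ : Slin a₀ ∈ H')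
    have h7 : ⟪Slin a₀, Slin a₀⟫ = 0 :=
      (Submodule.mem_orthogonal _ _).mp (hSperp a₀) _ hmem'
    exact ha₀ (inner_self_eq_zero.mp h7)
  have h8 := hadj (T u) u hu
  rw [hSz (T u) (TopL_mem μ π hcont H hHinv hv v' u), inner_zero_left] at h8
  exact inner_self_eq_zero.mp h8.symm

end

end SchurAux

/-- Schur orthogonality relations for matrix coefficients of a multiplicity-one
subrepresentation: with the paper's convention (inner products linear in the first variable),
`∫_G ⟨π(x)v, w⟩ conj(⟨π(x)v', w'⟩) dx = ⟨v, v'⟩⟨w', w⟩ / dim H`. -/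
theorem schur_orthogonality_multiplicity_one
    {G V : Type*} [Group G] [TopologicalSpace G] [IsTopologicalGroup G] [CompactSpace G]
    [T2Space G] [MeasurableSpace G] [BorelSpace G]
    (μ : Measure G) [μ.IsHaarMeasure] [IsProbabilityMeasure μ]
    [NormedAddCommGroup V] [InnerProductSpace ℂ V] [CompleteSpace V]
    (π : G →* (V ≃ₗᵢ[ℂ] V)) (hcont : ∀ v : V, Continuous fun x => π x v)
    (H : Submodule ℂ V) (hHclosed : IsClosed (H : Set V)) (hHfin : FiniteDimensional ℂ H)
    (hHinv : Invariant π H) (hHmin : MinimalInvariant π H) (hHmult : MultiplicityOne π H)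
    (v w : V) (hv : v ∈ H) (hw : w ∈ H) (v' w' : V) :
    ∫ x, ⟪w, π x v⟫ * ⟪π x v', w'⟫ ∂μ
      = ⟪v', v⟫ * ⟪w, w'⟫ / (Module.finrank ℂ H : ℂ) := by
  open SchurAux in
  classical
  haveI := hHfin
  haveI : Nontrivial H := Submodule.nontrivial_iff_ne_bot.mpr hHmin.1
  set n : ℕ := Module.finrank ℂ H with hn
  have hn0 : (n : ℂ) ≠ 0 := by
    have h : 0 < n := Module.finrank_pos
    exact_mod_cast Nat.cast_ne_zero.mpr (Nat.pos_iff_ne_zero.mp h)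
  set T := TopL μ π hcont v v' with hT
  have hmain : ∫ x, ⟪w, π x v⟫ * ⟪π x v', w'⟫ ∂μ = ⟪w, T w'⟫ := by
    rw [hT, inner_TopL]
    refine integral_congr_ae (Filter.Eventually.of_forall fun x => ?_)
    ring
  obtain ⟨c, hc⟩ := schur_scalar π H hHinv hHmin T
    (fun u => TopL_mem μ π hcont H hHinv hv v' u)
    (fun g u _ => TopL_equivariant μ π hcont v v' g u)
  -- value of c via an orthonormal basis
  set e := stdOrthonormalBasis ℂ H with he
  have hsum1 : ∀ x : G,
      (∑ i, ⟪π x v', ((e i : H) : V)⟫ * ⟪((e i : H) : V), π x v⟫) = ⟪v', v⟫ := by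
    intro x
    have hpv : π x v ∈ H := hHinv x v hv
    have hrepr : (∑ i, (⟪((e i : H) : V), π x v⟫) • ((e i : H) : V)) = π x v := by
      have h := congrArg (H.subtype) (e.sum_repr' (⟨π x v, hpv⟩ : H))
      simpa [map_sum, Submodule.coe_inner] using h
    calc ∑ i, ⟪π x v', ((e i : H) : V)⟫ * ⟪((e i : H) : V), π x v⟫
        = ⟪π x v', ∑ i, (⟪((e i : H) : V), π x v⟫) • ((e i : H) : V)⟫ := by
          rw [inner_sum]
          exact Finset.sum_congr rfl fun i _ => by rw [inner_smul_right]; ring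
      _ = ⟪π x v', π x v⟫ := by rw [hrepr]
      _ = ⟪v', v⟫ := LinearIsometryEquiv.inner_map_map _ _ _
  have hsum2 : (∑ i, ⟪((e i : H) : V), T ((e i : H) : V)⟫) = ⟪v', v⟫ := by
    have hterm : ∀ i, ⟪((e i : H) : V), T ((e i : H) : V)⟫
        = ∫ x, ⟪π x v', ((e i : H) : V)⟫ * ⟪((e i : H) : V), π x v⟫ ∂μ := fun i =>
      inner_TopL μ π hcont v v' _ _
    rw [Finset.sum_congr rfl fun i _ => hterm i,
      ← integral_finset_sum _ (fun i _ => intF' μ π hcont v v' _ _)]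
    simp_rw [hsum1]
    simp
  have hsum3 : (∑ i, ⟪((e i : H) : V), T ((e i : H) : V)⟫) = (n : ℂ) * c := by
    have hterm : ∀ i, ⟪((e i : H) : V), T ((e i : H) : V)⟫ = c := by
      intro i
      rw [hc _ (e i).2, inner_smul_right, inner_self_eq_norm_sq_to_K]
      have hni : ‖((e i : H) : V)‖ = 1 := e.orthonormal.1 i
      rw [hni]
      norm_num
    rw [Finset.sum_congr rfl fun i _ => hterm i]
    simp [hn, Finset.sum_const, mul_comm]
  have hcn : (n : ℂ) * c = ⟪v', v⟫ := by rw [← hsum3, hsum2]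
  -- decompose w'
  have hTw' : T w' = c • projH H w' := by
    have hdec : w' = projH H w' + (w' - projH H w') := by abel
    conv_lhs => rw [hdec]
    rw [map_add, hc _ (projH_mem H w'),
      TopL_vanish_perp μ π hcont H hHinv hHmin hHmult hv v' (sub_projH_mem H w'), add_zero]
  have hwp : ⟪w, projH H w'⟫ = ⟪w, w'⟫ := by
    have h0 : ⟪w, w' - projH H w'⟫ = 0 :=
      (Submodule.mem_orthogonal _ _).mp (sub_projH_mem H w') w hw
    rw [inner_sub_right] at h0
    linear_combination -h0
  rw [hmain, hTw', inner_smul_right, hwp]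
  rw [← hcn]
  field_simp
end

section
/- Let G be a compact Hausdorff topological group with normalized Haar measure, and let π be a continuous unitary representation of G on a complex Hilbert space V. Let H and H' be finite-dimensional minimal nontrivial invariant closed subspaces of V such that there exists no nonzero bounded linear map T : H → H' with T π(x)|_H = π(x)|_{H'} T for all x ∈ G (the subrepresentations on H and H' are inequivalent). Then for every w ∈ H, w' ∈ H' and all u, u' ∈ V, ∫_G ⟨π(x)u, w⟩ · ⟨w', π(x)u'⟩ dx = 0; that is, the G-average of the rank-one operator u ↦ ⟨u, w⟩ w' vanishes. -/
open MeasureTheory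

local notation "⟪" x ", " y "⟫" => @inner ℂ _ _ x y

/-- On a compact group, a left Haar probability measure is right invariant. -/
lemma haar_isMulRightInvariant
    {G : Type*} [Group G] [TopologicalSpace G] [IsTopologicalGroup G] [CompactSpace G]
    [T2Space G] [MeasurableSpace G] [BorelSpace G]
    (μ : Measure G) [μ.IsHaarMeasure] [IsProbabilityMeasure μ] :
    μ.IsMulRightInvariant := by
  constructor
  intro g0
  set ν : Measure G := μ.map (· * g0) with hν
  have hmeas : Measurable (fun x : G => x * g0) := (continuous_mul_right g0).measurable
  haveI hprob : IsProbabilityMeasure ν := Measure.isProbabilityMeasure_map hmeas.aemeasurable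
  haveI hleft : ν.IsMulLeftInvariant := by
    constructor
    intro y
    rw [hν, Measure.map_map (measurable_const_mul y) hmeas]
    have : ((y * ·) ∘ (· * g0)) = ((· * g0) ∘ (y * ·)) := by
      ext x; simp [mul_assoc]
    rw [this, ← Measure.map_map hmeas (measurable_const_mul y),
      MeasureTheory.map_mul_left_eq_self μ y]
  haveI hopen : ν.IsOpenPosMeasure := by
    constructor
    intro U hU hne
    rw [hν, Measure.map_apply hmeas hU.measurableSet]
    apply (hU.preimage (continuous_mul_right g0)).measure_ne_zero μ
    obtain ⟨u, hu⟩ := hne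
    exact ⟨u * g0⁻¹, by simpa using hu⟩
  haveI : ν.IsHaarMeasure := ⟨⟩
  exact Measure.isHaarMeasure_eq_of_isProbabilityMeasure ν μ

/-- Matrix coefficients of inequivalent irreducible subrepresentations are orthogonal:
if there is no nonzero bounded intertwining operator `T : H → H'`, then the `G`-average of the
rank-one operator `u ↦ ⟨u, w⟩ w'` vanishes (paper convention: inner products linear in the
first variable). -/
theorem averaged_rank_one_operator_inequivalent_eq_zero
    {G V : Type*} [Group G] [TopologicalSpace G] [IsTopologicalGroup G] [CompactSpace G]
    [T2Space G] [MeasurableSpace G] [BorelSpace G]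
    (μ : Measure G) [μ.IsHaarMeasure] [IsProbabilityMeasure μ]
    [NormedAddCommGroup V] [InnerProductSpace ℂ V] [CompleteSpace V]
    (π : G →* (V ≃ₗᵢ[ℂ] V)) (hcont : ∀ v : V, Continuous fun x => π x v)
    (H H' : Submodule ℂ V)
    (hHclosed : IsClosed (H : Set V)) (hH'closed : IsClosed (H' : Set V))
    (hHfin : FiniteDimensional ℂ H) (hH'fin : FiniteDimensional ℂ H')
    (hHinv : Invariant π H) (hH'inv : Invariant π H')
    (hHmin : MinimalInvariant π H) (hH'min : MinimalInvariant π H')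
    (hineq : ∀ T : H →L[ℂ] H',
      (∀ (x : G) (v w : H), (w : V) = π x (v : V) → ((T w : V)) = π x ((T v : V))) → T = 0)
    (w : V) (hw : w ∈ H) (w' : V) (hw' : w' ∈ H') (u u' : V) :
    ∫ x, ⟪w, π x u⟫ * ⟪π x u', w'⟫ ∂μ = 0 := by
  classical
  haveI : μ.IsMulRightInvariant := haar_isMulRightInvariant μ
  haveI : CompleteSpace H := hHclosed.completeSpace_coe
  haveI : CompleteSpace H' := hH'closed.completeSpace_coe
  have hmul : ∀ (x y : G) (v : V), π (x * y) v = π x (π y v) := by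
    intro x y v; rw [map_mul]; rfl
  have hinvapp : ∀ (x : G) (v : V), π x (π x⁻¹ v) = v := by
    intro x v
    rw [← hmul, mul_inv_cancel, map_one]; rfl
  have hcontinv : Continuous fun x : G => π x⁻¹ w' := (hcont w').comp continuous_inv
  set F : V → G → V := fun v x => ⟪w, π x v⟫ • π x⁻¹ w' with hF
  have hFcont : ∀ v, Continuous (F v) :=
    fun v => (continuous_const.inner (hcont v)).smul hcontinv
  have hFint : ∀ v, Integrable (F v) μ := fun v =>
    (hFcont v).integrable_of_hasCompactSupport (isClosed_tsupport _).isCompact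
  set g : V → V := fun v => ∫ x, F v x ∂μ with hg
  -- additivity of g
  have hgadd : ∀ v₁ v₂ : V, g (v₁ + v₂) = g v₁ + g v₂ := by
    intro v₁ v₂
    rw [hg]
    simp only
    rw [← integral_add (hFint v₁) (hFint v₂)]
    congr 1; funext x
    simp only [hF, LinearIsometryEquiv.map_add, inner_add_right, add_smul]
  have hgsmul : ∀ (c : ℂ) (v : V), g (c • v) = c • g v := by
    intro c v
    rw [hg]
    simp only
    rw [← integral_smul]
    congr 1; funext x
    simp only [hF, LinearIsometryEquiv.map_smul, inner_smul_right, smul_smul]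
  -- g maps into H'
  have hgH' : ∀ v : V, g v ∈ H' := by
    intro v
    have hmem : ∀ x : G, F v x ∈ H' := fun x =>
      H'.smul_mem _ (hH'inv x⁻¹ w' hw')
    set Fc : G → H' := fun x => ⟨F v x, hmem x⟩ with hFc
    have hFccont : Continuous Fc := (hFcont v).subtype_mk _
    have hFcint : Integrable Fc μ :=
      hFccont.integrable_of_hasCompactSupport (isClosed_tsupport _).isCompact
    have hcomm := (H'.subtypeL).integral_comp_comm hFcint
    have h3 : g v = H'.subtypeL (∫ x, Fc x ∂μ) := by
      rw [hg]; simp only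
      rw [← hcomm]; rfl
    rw [h3]
    exact Submodule.coe_mem _
  -- g intertwines with π
  have hginter : ∀ (y : G) (v : V), g (π y v) = π y (g v) := by
    intro y v
    have L : V →L[ℂ] V := ((π y).toContinuousLinearEquiv : V →L[ℂ] V)
    have step1 : g (π y v) = ∫ x, F (π y v) (x * y⁻¹) ∂μ := by
      rw [hg]; simp only
      rw [integral_mul_right_eq_self (F (π y v)) y⁻¹]
    have step2 : ∀ x : G, F (π y v) (x * y⁻¹) =
        ((π y).toContinuousLinearEquiv : V →L[ℂ] V) (F v x) := by
      intro x
      have h1 : π (x * y⁻¹) (π y v) = π x v := by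
        rw [← hmul, inv_mul_cancel_right]
      have h2 : π (x * y⁻¹)⁻¹ w' = π y (π x⁻¹ w') := by
        rw [← hmul, mul_inv_rev, inv_inv]
      simp only [hF, h1, h2]
      rw [ContinuousLinearMap.map_smul]
      rfl
    rw [step1]
    simp_rw [step2]
    rw [ContinuousLinearMap.integral_comp_comm _ (hFint v)]
    rfl
  -- g vanishes on H (by inequivalence)
  have hgH : ∀ v : V, v ∈ H → g v = 0 := by
    intro v hv
    let T : H →ₗ[ℂ] H' :=
      { toFun := fun z => ⟨g z, hgH' z⟩
        map_add' := by intro a b; ext; simpa using hgadd a b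
        map_smul' := by intro c a; ext; simpa using hgsmul c a }
    let Tc : H →L[ℂ] H' := LinearMap.toContinuousLinearMap T
    have hT0 : Tc = 0 := by
      apply hineq
      intro x a b hab
      have : (Tc b : V) = g (π x (a : V)) := by
        simp only [Tc, T, LinearMap.coe_toContinuousLinearMap', LinearMap.coe_mk,
          AddHom.coe_mk]
        rw [hab]
      rw [this, hginter]
      rfl
    have : Tc ⟨v, hv⟩ = 0 := by rw [hT0]; rfl
    have h2 : (Tc ⟨v, hv⟩ : V) = g v := rfl
    rw [this] at h2
    exact h2.symm
  -- g vanishes on Hᗮ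
  have hgHperp : ∀ v : V, v ∈ Hᗮ → g v = 0 := by
    intro v hv
    rw [hg]; simp only
    have : ∀ x : G, F v x = 0 := by
      intro x
      have h1 : (⟪w, π x v⟫ : ℂ) = ⟪π x⁻¹ w, v⟫ := by
        conv_lhs => rw [← hinvapp x w]
        rw [(π x).inner_map_map]
      have h2 : (⟪π x⁻¹ w, v⟫ : ℂ) = 0 :=
        (Submodule.mem_orthogonal H v).mp hv _ (hHinv x⁻¹ w hw)
      show ⟪w, π x v⟫ • π x⁻¹ w' = 0
      rw [h1, h2, zero_smul]
    simp_rw [this]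
    exact integral_zero _ _
  -- decompose u and conclude g u = 0
  obtain ⟨p, hp, q, hq, hupq⟩ := H.exists_add_mem_mem_orthogonal u
  have hgu : g u = 0 := by
    rw [hupq, hgadd, hgH p hp, hgHperp q hq, add_zero]
  -- the integral equals ⟪u', g u⟫
  have key : ∫ x, ⟪w, π x u⟫ * ⟪π x u', w'⟫ ∂μ = ⟪u', g u⟫ := by
    rw [hg]
    simp only
    rw [← integral_inner (hFint u) u']
    congr 1; funext x
    rw [hF]
    simp only
    rw [inner_smul_right]
    congr 1
    conv_lhs => rw [← hinvapp x w']
    exact (π x).inner_map_map u' (π x⁻¹ w')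
  rw [key, hgu, inner_zero_right]
end

section
/- For all integers n, j with n ≥ 3 and 1 ≤ j ≤ n−2 there exists a constant C > 0 such that for all integers p ≥ 0 and q ≥ 1, 1 − ε(n,j,p,q) ≤ C · (2+p)(2+q)/(2+p+q)². -/
set_option maxHeartbeats 1600000

private theorem real_version (m t a b : ℝ) (hm : 3 ≤ m) (ht1 : 1 ≤ t) (ht2 : t ≤ m - 2)
    (ha : 0 ≤ a) (hb : 1 ≤ b) :
    1 - ((b + 1 + t) / (a + b + m) * (b / (b + t)) * ((b + m - 1) / (a + b + m - 1))
      + (a + m - 1) / (a + b + m - 2) * ((a + m - 2 - t) / (a + m - 1 - t))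
        * (a / (a + b + m - 1)))
      ≤ (m ^ 2 + 1) * ((2 + a) * (2 + b) / (2 + a + b) ^ 2) := by
  have hs : (0:ℝ) < a + b + m := by linarith
  have hs1 : (0:ℝ) < a + b + m - 1 := by linarith
  have hs2 : (0:ℝ) < a + b + m - 2 := by linarith
  have hbt : (0:ℝ) < b + t := by linarith
  have hB : (0:ℝ) < a + m - 1 - t := by linarith
  have hB2 : (0:ℝ) ≤ a + m - 2 - t := by linarith
  have ha1 : (0:ℝ) < a + 1 := by linarith
  have h2ab : (0:ℝ) < 2 + a + b := by linarith
  -- T1 lower bound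
  have hT1 : b ^ 2 / (a + b + m) ^ 2
      ≤ (b + 1 + t) / (a + b + m) * (b / (b + t)) * ((b + m - 1) / (a + b + m - 1)) := by
    rw [div_mul_div_comm, div_mul_div_comm, div_le_div_iff₀ (by positivity) (by positivity)]
    have hbm : (0:ℝ) ≤ b * m := mul_nonneg (by linarith) (by linarith)
    have htm : (0:ℝ) ≤ (1 + t) * (m - 1) := mul_nonneg (by linarith) (by linarith)
    nlinarith [mul_pos hs hs1, mul_pos hs (mul_pos hs hbt), mul_nonneg hs.le (mul_nonneg (by linarith : (0:ℝ) ≤ b) (by linarith : (0:ℝ) ≤ b * m + (1 + t) * (m - 1))), mul_nonneg (mul_nonneg hs.le (by linarith : (0:ℝ) ≤ b)) hbt.le]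
  -- T2 lower bound
  have hT2 : a ^ 2 / (a + b + m) ^ 2 - a / (a + b + m) ^ 2
      ≤ (a + m - 1) / (a + b + m - 2) * ((a + m - 2 - t) / (a + m - 1 - t))
        * (a / (a + b + m - 1)) := by
    have h1 : a ^ 2 / (a + b + m) ^ 2 - a / (a + b + m) ^ 2
        ≤ a ^ 3 / ((a + 1) * (a + b + m) ^ 2) := by
      have : a ^ 2 / (a + b + m) ^ 2 - a / (a + b + m) ^ 2 = (a ^ 2 - a) / (a + b + m) ^ 2 := by
        ring
      rw [this, div_le_div_iff₀ (by positivity) (by positivity)]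
      nlinarith [sq_nonneg (a + b + m), mul_nonneg ha (sq_nonneg (a + b + m))]
    have h2 : a ^ 3 / ((a + 1) * (a + b + m) ^ 2)
        ≤ (a + m - 1) / (a + b + m - 2) * ((a + m - 2 - t) / (a + m - 1 - t))
          * (a / (a + b + m - 1)) := by
      have f1 : a / (a + b + m) ≤ (a + m - 1) / (a + b + m - 2) := by
        rw [div_le_div_iff₀ hs hs2]; nlinarith
      have f2 : a / (a + 1) ≤ (a + m - 2 - t) / (a + m - 1 - t) := by
        rw [div_le_div_iff₀ ha1 hB]; nlinarith
      have f3 : a / (a + b + m) ≤ a / (a + b + m - 1) := by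
        exact div_le_div_of_nonneg_left ha hs1 (by linarith)
      have step : a / (a + b + m) * (a / (a + 1)) * (a / (a + b + m))
          ≤ (a + m - 1) / (a + b + m - 2) * ((a + m - 2 - t) / (a + m - 1 - t))
            * (a / (a + b + m - 1)) := by
        have n1 : (0:ℝ) ≤ a / (a + 1) := div_nonneg ha ha1.le
        have n2 : (0:ℝ) ≤ (a + m - 1) / (a + b + m - 2) :=
          div_nonneg (by linarith) hs2.le
        have n3 : (0:ℝ) ≤ a / (a + b + m) := div_nonneg ha hs.le
        have n4 : (0:ℝ) ≤ (a + m - 1) / (a + b + m - 2) * ((a + m - 2 - t) / (a + m - 1 - t)) :=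
          mul_nonneg n2 (div_nonneg hB2 hB.le)
        exact mul_le_mul (mul_le_mul f1 f2 n1 n2) f3 n3 n4
      calc a ^ 3 / ((a + 1) * (a + b + m) ^ 2)
          = a / (a + b + m) * (a / (a + 1)) * (a / (a + b + m)) := by
            field_simp
        _ ≤ _ := step
    linarith
  have key : 1 - b ^ 2 / (a + b + m) ^ 2 - (a ^ 2 / (a + b + m) ^ 2 - a / (a + b + m) ^ 2)
      ≤ (m ^ 2 + 1) * ((2 + a) * (2 + b) / (2 + a + b) ^ 2) := by
    have hX : (0:ℝ) ≤ (a + b + m) ^ 2 - b ^ 2 - a ^ 2 + a := by nlinarith [mul_nonneg ha (by linarith : (0:ℝ) ≤ b)]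
    have e1 : 1 - b ^ 2 / (a + b + m) ^ 2 - (a ^ 2 / (a + b + m) ^ 2 - a / (a + b + m) ^ 2)
        = ((a + b + m) ^ 2 - b ^ 2 - a ^ 2 + a) / (a + b + m) ^ 2 := by
      field_simp
      ring
    rw [e1]
    calc ((a + b + m) ^ 2 - b ^ 2 - a ^ 2 + a) / (a + b + m) ^ 2
        ≤ ((a + b + m) ^ 2 - b ^ 2 - a ^ 2 + a) / (2 + a + b) ^ 2 := by
          apply div_le_div_of_nonneg_left hX (by positivity)
          nlinarith
      _ ≤ ((m ^ 2 + 1) * ((2 + a) * (2 + b))) / (2 + a + b) ^ 2 := by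
          gcongr
          have hb0 : (0:ℝ) ≤ b := by linarith
          nlinarith [mul_nonneg (by nlinarith [sq_nonneg (m - 1)] : (0:ℝ) ≤ 2 * m ^ 2 - 2 * m + 1) ha,
            mul_nonneg (by nlinarith [sq_nonneg (m - 1)] : (0:ℝ) ≤ 2 * m ^ 2 - 2 * m + 2) hb0,
            mul_nonneg (by nlinarith : (0:ℝ) ≤ m ^ 2 - 1) (mul_nonneg ha hb0)]
      _ = (m ^ 2 + 1) * ((2 + a) * (2 + b) / (2 + a + b) ^ 2) := by ring
  linarith

/-- The coefficient `ε^{ΦΦ}_{ppqqj}` by which `|⟨z,w⟩|²` multiplies the projection kernel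
`K^Φ_{pqj}` back onto itself, for the sphere in `ℂⁿ`. -/
noncomputable def epsCoeff (n j p q : ℤ) : ℝ :=
    ((q : ℝ) + 1 + (j : ℝ)) / ((p : ℝ) + (q : ℝ) + (n : ℝ))
      * ((q : ℝ) / ((q : ℝ) + (j : ℝ)))
      * (((q : ℝ) + (n : ℝ) - 1) / ((p : ℝ) + (q : ℝ) + (n : ℝ) - 1))
  + ((p : ℝ) + (n : ℝ) - 1) / ((p : ℝ) + (q : ℝ) + (n : ℝ) - 2)
      * (((p : ℝ) + (n : ℝ) - 2 - (j : ℝ)) / ((p : ℝ) + (n : ℝ) - 1 - (j : ℝ)))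
      * ((p : ℝ) / ((p : ℝ) + (q : ℝ) + (n : ℝ) - 1))

/-- For all integers `n ≥ 3` and `1 ≤ j ≤ n-2` there is a constant `C > 0` such that for all
integers `p ≥ 0` and `q ≥ 1`, `1 - ε(n,j,p,q) ≤ C · (2+p)(2+q)/(2+p+q)²`. -/
theorem one_sub_epsCoeff_le (n j : ℤ) (hn : 3 ≤ n) (hj1 : 1 ≤ j) (hj2 : j ≤ n - 2) :
    ∃ C : ℝ, 0 < C ∧ ∀ p q : ℤ, 0 ≤ p → 1 ≤ q →
      1 - epsCoeff n j p q
        ≤ C * ((2 + (p : ℝ)) * (2 + (q : ℝ)) / (2 + (p : ℝ) + (q : ℝ)) ^ 2) := by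
  refine ⟨(n : ℝ) ^ 2 + 1, by positivity, ?_⟩
  intro p q hp hq
  have hm : (3 : ℝ) ≤ (n : ℝ) := by exact_mod_cast hn
  have ht1 : (1 : ℝ) ≤ (j : ℝ) := by exact_mod_cast hj1
  have ht2 : (j : ℝ) ≤ (n : ℝ) - 2 := by
    have : ((j : ℝ)) ≤ ((n - 2 : ℤ) : ℝ) := by exact_mod_cast hj2
    push_cast at this
    linarith
  have ha : (0 : ℝ) ≤ (p : ℝ) := by exact_mod_cast hp
  have hb : (1 : ℝ) ≤ (q : ℝ) := by exact_mod_cast hq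
  exact real_version (n : ℝ) (j : ℝ) (p : ℝ) (q : ℝ) hm ht1 ht2 ha hb
end

section
/- Let n ≥ 2 be an integer and let θ be a real number with 0 ≤ θ < 1/2. Then there exists a constant C > 0 such that for every integer i ≥ 2, ∑ (p·q)^{n−2+θ} · (p+q)^{1−2θ} ≤ C · i^{2(n−θ)−1}, where the sum ranges over all pairs of integers (p, q) with p ≥ 1, q ≥ 1 and (i−1)² ≤ 2pq ≤ i². -/
open Finset

/-- Bound for each term of the inner sum. -/
lemma term_bound_aux (n : ℕ) (hn : 2 ≤ n) (θ : ℝ) (hθ0 : 0 ≤ θ) (hθ1 : θ < 1 / 2)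
    (i p q : ℕ) (hi : 2 ≤ i) (hp : 1 ≤ p) (hq : 1 ≤ q)
    (h2 : 2 * p * q ≤ i ^ 2) (hpq : p ≤ q) :
    ((p : ℝ) * (q : ℝ)) ^ ((n : ℝ) - 2 + θ) * ((p : ℝ) + (q : ℝ)) ^ (1 - 2 * θ)
      ≤ (i : ℝ) ^ (2 * (n : ℝ) - 2 - 2 * θ) * (p : ℝ) ^ (2 * θ - 1) := by
  have hp0 : (0:ℝ) < p := by exact_mod_cast hp
  have hq0 : (0:ℝ) < q := by exact_mod_cast hq
  have hi0 : (0:ℝ) < i := by positivity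
  have h2' : 2 * (p:ℝ) * q ≤ (i:ℝ)^2 := by exact_mod_cast h2
  have hpq' : (p:ℝ) ≤ q := by exact_mod_cast hpq
  have he1 : (0:ℝ) ≤ (n:ℝ) - 2 + θ := by
    have : (2:ℝ) ≤ n := by exact_mod_cast hn
    linarith
  have he2 : (0:ℝ) ≤ 1 - 2 * θ := by linarith
  have hA : ((p:ℝ) * q) ^ ((n : ℝ) - 2 + θ) ≤ ((i:ℝ)^2) ^ ((n : ℝ) - 2 + θ) := by
    apply Real.rpow_le_rpow (by positivity) (by nlinarith) he1
  have hB : ((p:ℝ) + q) ^ (1 - 2*θ) ≤ ((i:ℝ)^2 / p) ^ (1 - 2*θ) := by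
    apply Real.rpow_le_rpow (by positivity) ?_ he2
    rw [le_div_iff₀ hp0]
    nlinarith
  calc ((p : ℝ) * (q : ℝ)) ^ ((n : ℝ) - 2 + θ) * ((p : ℝ) + (q : ℝ)) ^ (1 - 2 * θ)
      ≤ ((i:ℝ)^2) ^ ((n : ℝ) - 2 + θ) * ((i:ℝ)^2 / p) ^ (1 - 2*θ) := by
        apply mul_le_mul hA hB (by positivity) (by positivity)
    _ = (i : ℝ) ^ (2 * (n : ℝ) - 2 - 2 * θ) * (p : ℝ) ^ (2 * θ - 1) := by
        rw [Real.div_rpow (by positivity) hp0.le, ← Real.rpow_natCast (i:ℝ) 2,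
          ← Real.rpow_mul hi0.le, ← Real.rpow_mul hi0.le] at *
        rw [div_eq_mul_inv]
        rw [← Real.rpow_neg hp0.le]
        rw [← mul_assoc]
        rw [← Real.rpow_add hi0]
        congr 1
        · congr 1; push_cast; ring
        · congr 1; ring

/-- Cardinality bound for the inner index set. -/
lemma card_bound_aux (i p : ℕ) (hi : 2 ≤ i) (hp : 1 ≤ p) (hpi : p ≤ i) :
    (((Finset.Icc 1 (i ^ 2)).filter
        (fun q => ((i - 1) ^ 2 ≤ 2 * p * q ∧ 2 * p * q ≤ i ^ 2) ∧ p ≤ q)).card : ℝ)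
      ≤ 3 * i / p := by
  set a := (i - 1) ^ 2 / (2 * p) with ha
  set b := i ^ 2 / (2 * p) with hb
  have h2p : 0 < 2 * p := by omega
  have hsub : (Finset.Icc 1 (i ^ 2)).filter
        (fun q => ((i - 1) ^ 2 ≤ 2 * p * q ∧ 2 * p * q ≤ i ^ 2) ∧ p ≤ q) ⊆ Finset.Icc a b := by
    intro q hq
    simp only [Finset.mem_filter, Finset.mem_Icc] at hq
    obtain ⟨⟨hq1, hq2⟩, ⟨hc1, hc2⟩, hpq⟩ := hq
    refine Finset.mem_Icc.mpr ⟨?_, ?_⟩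
    · calc a ≤ 2 * p * q / (2 * p) := Nat.div_le_div_right hc1
        _ = q := Nat.mul_div_cancel_left q h2p
    · exact (Nat.le_div_iff_mul_le h2p).mpr (by linarith [hc2, mul_comm q (2*p), mul_assoc 2 p q])
  have hcard : (((Finset.Icc 1 (i ^ 2)).filter
        (fun q => ((i - 1) ^ 2 ≤ 2 * p * q ∧ 2 * p * q ≤ i ^ 2) ∧ p ≤ q)).card : ℝ)
      ≤ ((Finset.Icc a b).card : ℝ) := by
    exact_mod_cast Finset.card_le_card hsub
  have hab : a ≤ b := Nat.div_le_div_right (Nat.pow_le_pow_left (by omega) 2)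
  rw [Nat.card_Icc] at hcard
  have hcast : ((b + 1 - a : ℕ) : ℝ) = (b : ℝ) + 1 - a := by
    rw [Nat.cast_sub (by omega)]; push_cast; ring
  rw [hcast] at hcard
  -- real bounds on a and b
  have hb' : (b : ℝ) * (2 * p) ≤ (i : ℝ) ^ 2 := by
    exact_mod_cast Nat.div_mul_le_self (i ^ 2) (2 * p)
  have ha' : ((i : ℝ) - 1) ^ 2 < ((a : ℝ) + 1) * (2 * p) := by
    have : (i - 1) ^ 2 < (a + 1) * (2 * p) := by
      rw [ha]
      have h1 := Nat.div_add_mod ((i - 1) ^ 2) (2 * p)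
      have h2 := Nat.mod_lt ((i - 1) ^ 2) h2p
      nlinarith [h1, h2, ha]
    have hcast2 : ((i - 1 : ℕ) : ℝ) = (i : ℝ) - 1 := by
      rw [Nat.cast_sub (by omega)]; norm_num
    calc ((i : ℝ) - 1) ^ 2 = (((i - 1 : ℕ) : ℝ)) ^ 2 := by rw [hcast2]
      _ < ((a : ℝ) + 1) * (2 * p) := by exact_mod_cast this
  have hp0 : (0:ℝ) < p := by exact_mod_cast hp
  have hpi' : (p:ℝ) ≤ i := by exact_mod_cast hpi
  have hi0 : (2:ℝ) ≤ i := by exact_mod_cast hi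
  rw [le_div_iff₀ hp0]
  nlinarith [hcard, hb', ha', hp0, hpi', hi0]

/-- Bound for the inner sum over `q` for a fixed `p`. -/
lemma inner_sum_bound (n : ℕ) (hn : 2 ≤ n) (θ : ℝ) (hθ0 : 0 ≤ θ) (hθ1 : θ < 1 / 2)
    (i p : ℕ) (hi : 2 ≤ i) (hp : 1 ≤ p) :
    ∑ q ∈ (Finset.Icc 1 (i ^ 2)).filter
        (fun q => ((i - 1) ^ 2 ≤ 2 * p * q ∧ 2 * p * q ≤ i ^ 2) ∧ p ≤ q),
      ((p : ℝ) * (q : ℝ)) ^ ((n : ℝ) - 2 + θ) * ((p : ℝ) + (q : ℝ)) ^ (1 - 2 * θ)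
      ≤ 3 * (i : ℝ) ^ (2 * (n : ℝ) - 1 - 2 * θ) * (p : ℝ) ^ (2 * θ - 2) := by
  set Q := (Finset.Icc 1 (i ^ 2)).filter
      (fun q => ((i - 1) ^ 2 ≤ 2 * p * q ∧ 2 * p * q ≤ i ^ 2) ∧ p ≤ q) with hQ
  have hi0 : (0:ℝ) < i := by positivity
  have hp0 : (0:ℝ) < p := by exact_mod_cast hp
  rcases Q.eq_empty_or_nonempty with hE | ⟨q0, hq0⟩
  · rw [hE, Finset.sum_empty]; positivity
  · -- from nonemptiness, p ≤ i
    have hq0' := hq0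
    rw [hQ, Finset.mem_filter, Finset.mem_Icc] at hq0'
    obtain ⟨⟨_, _⟩, ⟨_, hc2⟩, hpq0⟩ := hq0'
    have hpi : p ≤ i := by nlinarith
    have hterm : ∀ q ∈ Q,
        ((p : ℝ) * (q : ℝ)) ^ ((n : ℝ) - 2 + θ) * ((p : ℝ) + (q : ℝ)) ^ (1 - 2 * θ)
          ≤ (i : ℝ) ^ (2 * (n : ℝ) - 2 - 2 * θ) * (p : ℝ) ^ (2 * θ - 1) := by
      intro q hq
      rw [hQ, Finset.mem_filter, Finset.mem_Icc] at hq
      obtain ⟨⟨hq1, _⟩, ⟨_, hc2'⟩, hpq⟩ := hq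
      exact term_bound_aux n hn θ hθ0 hθ1 i p q hi hp hq1 hc2' hpq
    calc ∑ q ∈ Q, ((p : ℝ) * (q : ℝ)) ^ ((n : ℝ) - 2 + θ) * ((p : ℝ) + (q : ℝ)) ^ (1 - 2 * θ)
        ≤ Q.card • ((i : ℝ) ^ (2 * (n : ℝ) - 2 - 2 * θ) * (p : ℝ) ^ (2 * θ - 1)) :=
          Finset.sum_le_card_nsmul _ _ _ hterm
      _ = (Q.card : ℝ) * ((i : ℝ) ^ (2 * (n : ℝ) - 2 - 2 * θ) * (p : ℝ) ^ (2 * θ - 1)) := by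
          rw [nsmul_eq_mul]
      _ ≤ (3 * i / p) * ((i : ℝ) ^ (2 * (n : ℝ) - 2 - 2 * θ) * (p : ℝ) ^ (2 * θ - 1)) := by
          apply mul_le_mul_of_nonneg_right (card_bound_aux i p hi hp hpi) (by positivity)
      _ = 3 * (i : ℝ) ^ (2 * (n : ℝ) - 1 - 2 * θ) * (p : ℝ) ^ (2 * θ - 2) := by
          have e1 : (i:ℝ) ^ (2*(n:ℝ)-1-2*θ) = (i:ℝ)^(1:ℝ) * (i:ℝ) ^ (2*(n:ℝ)-2-2*θ) := by
            rw [← Real.rpow_add hi0]; ring_nf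
          have e2 : (p:ℝ) ^ (2*θ-2) = (p:ℝ)^(-1:ℝ) * (p:ℝ) ^ (2*θ-1) := by
            rw [← Real.rpow_add hp0]; ring_nf
          rw [e1, e2, Real.rpow_one, Real.rpow_neg_one]
          field_simp

/-- For `n ≥ 2` and `0 ≤ θ < 1/2` there is a constant `C > 0` such that for every integer
`i ≥ 2`, `∑ (pq)^{n-2+θ} (p+q)^{1-2θ} ≤ C i^{2(n-θ)-1}`, the sum being over all pairs of
integers `p, q ≥ 1` with `(i-1)² ≤ 2pq ≤ i²`. -/
theorem hyperbolic_sum_power_bound (n : ℕ) (hn : 2 ≤ n) (θ : ℝ) (hθ0 : 0 ≤ θ)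
    (hθ1 : θ < 1 / 2) :
    ∃ C : ℝ, 0 < C ∧ ∀ i : ℕ, 2 ≤ i →
      ∑ pq ∈ (Finset.Icc 1 (i ^ 2) ×ˢ Finset.Icc 1 (i ^ 2)).filter
          (fun pq => (i - 1) ^ 2 ≤ 2 * pq.1 * pq.2 ∧ 2 * pq.1 * pq.2 ≤ i ^ 2),
        ((pq.1 : ℝ) * (pq.2 : ℝ)) ^ ((n : ℝ) - 2 + θ)
          * ((pq.1 : ℝ) + (pq.2 : ℝ)) ^ (1 - 2 * θ)
      ≤ C * (i : ℝ) ^ (2 * ((n : ℝ) - θ) - 1) := by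
  have hs : (2 * θ - 2) < -1 := by linarith
  have hsummable : Summable (fun p : ℕ => (p : ℝ) ^ (2 * θ - 2)) :=
    Real.summable_nat_rpow.mpr hs
  set C₁ := ∑' p : ℕ, (p : ℝ) ^ (2 * θ - 2) with hC₁
  have hC₁pos : (0 : ℝ) < C₁ := by
    have h1 : ((1 : ℕ) : ℝ) ^ (2 * θ - 2) ≤ C₁ :=
      Summable.le_tsum hsummable 1 (fun j _ => Real.rpow_nonneg (Nat.cast_nonneg j) _)
    simp only [Nat.cast_one, Real.one_rpow] at h1
    linarith
  refine ⟨6 * C₁, by linarith, fun i hi => ?_⟩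
  have hi0 : (0 : ℝ) < i := by positivity
  set A := (Finset.Icc 1 (i ^ 2) ×ˢ Finset.Icc 1 (i ^ 2)).filter
      (fun pq => (i - 1) ^ 2 ≤ 2 * pq.1 * pq.2 ∧ 2 * pq.1 * pq.2 ≤ i ^ 2) with hA
  set f : ℕ × ℕ → ℝ := fun pq =>
    ((pq.1 : ℝ) * (pq.2 : ℝ)) ^ ((n : ℝ) - 2 + θ) * ((pq.1 : ℝ) + (pq.2 : ℝ)) ^ (1 - 2 * θ)
    with hf
  have hf0 : ∀ pq : ℕ × ℕ, 0 ≤ f pq := fun pq => by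
    apply mul_nonneg <;> apply Real.rpow_nonneg <;> positivity
  have hfsym : ∀ pq : ℕ × ℕ, f pq.swap = f pq := by
    intro pq
    simp only [hf, Prod.fst_swap, Prod.snd_swap]
    rw [mul_comm (pq.2:ℝ) (pq.1:ℝ), add_comm (pq.2:ℝ) (pq.1:ℝ)]
  have hswap : ∀ pq : ℕ × ℕ, pq ∈ A → pq.swap ∈ A := by
    intro pq hpq
    rw [hA, Finset.mem_filter, Finset.mem_product] at *
    refine ⟨⟨hpq.1.2, hpq.1.1⟩, ?_⟩
    rw [Prod.snd_swap, Prod.fst_swap]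
    have e : 2 * pq.2 * pq.1 = 2 * pq.1 * pq.2 := mul_right_comm 2 pq.2 pq.1
    rw [e]
    exact hpq.2
  have hsym : ∑ pq ∈ A.filter (fun pq => pq.2 ≤ pq.1), f pq
      = ∑ pq ∈ A.filter (fun pq => pq.1 ≤ pq.2), f pq := by
    apply Finset.sum_nbij' (i := Prod.swap) (j := Prod.swap)
    · intro a ha
      rw [Finset.mem_filter] at *
      exact ⟨hswap a ha.1, by simpa using ha.2⟩
    · intro a ha
      rw [Finset.mem_filter] at *
      exact ⟨hswap a ha.1, by simpa using ha.2⟩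
    · intro a _; exact Prod.swap_swap a
    · intro a _; exact Prod.swap_swap a
    · intro a _; exact (hfsym a).symm
  have hS2 : ∑ pq ∈ A, f pq ≤ 2 * ∑ pq ∈ A.filter (fun pq => pq.1 ≤ pq.2), f pq := by
    rw [← Finset.sum_filter_add_sum_filter_not A (fun pq => pq.1 ≤ pq.2) f]
    have hle : ∑ pq ∈ A.filter (fun pq => ¬ pq.1 ≤ pq.2), f pq
        ≤ ∑ pq ∈ A.filter (fun pq => pq.2 ≤ pq.1), f pq := by
      apply Finset.sum_le_sum_of_subset_of_nonneg
      · apply Finset.monotone_filter_right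
        intro pq _ h
        exact le_of_not_ge h
      · intros pq _ _; exact hf0 pq
    linarith [hsym]
  have hprod : ∑ pq ∈ A.filter (fun pq => pq.1 ≤ pq.2), f pq
      = ∑ p ∈ Finset.Icc 1 (i ^ 2), ∑ q ∈ (Finset.Icc 1 (i ^ 2)).filter
          (fun q => ((i - 1) ^ 2 ≤ 2 * p * q ∧ 2 * p * q ≤ i ^ 2) ∧ p ≤ q), f (p, q) := by
    rw [hA, Finset.filter_filter, Finset.sum_filter, Finset.sum_product]
    simp_rw [← Finset.sum_filter]
  have hinner : ∀ p ∈ Finset.Icc 1 (i ^ 2),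
      ∑ q ∈ (Finset.Icc 1 (i ^ 2)).filter
          (fun q => ((i - 1) ^ 2 ≤ 2 * p * q ∧ 2 * p * q ≤ i ^ 2) ∧ p ≤ q), f (p, q)
        ≤ 3 * (i : ℝ) ^ (2 * (n : ℝ) - 1 - 2 * θ) * (p : ℝ) ^ (2 * θ - 2) := by
    intro p hp
    exact inner_sum_bound n hn θ hθ0 hθ1 i p hi (Finset.mem_Icc.mp hp).1
  have htsum : ∑ p ∈ Finset.Icc 1 (i ^ 2), (p : ℝ) ^ (2 * θ - 2) ≤ C₁ :=
    Summable.sum_le_tsum _ (fun j _ => Real.rpow_nonneg (Nat.cast_nonneg j) _) hsummable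
  have hE : (2 * ((n : ℝ) - θ) - 1) = 2 * (n : ℝ) - 1 - 2 * θ := by ring
  calc ∑ pq ∈ A, f pq
      ≤ 2 * ∑ pq ∈ A.filter (fun pq => pq.1 ≤ pq.2), f pq := hS2
    _ = 2 * ∑ p ∈ Finset.Icc 1 (i ^ 2), ∑ q ∈ (Finset.Icc 1 (i ^ 2)).filter
          (fun q => ((i - 1) ^ 2 ≤ 2 * p * q ∧ 2 * p * q ≤ i ^ 2) ∧ p ≤ q), f (p, q) := by
        rw [hprod]
    _ ≤ 2 * ∑ p ∈ Finset.Icc 1 (i ^ 2),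
          3 * (i : ℝ) ^ (2 * (n : ℝ) - 1 - 2 * θ) * (p : ℝ) ^ (2 * θ - 2) := by
        have := Finset.sum_le_sum hinner
        linarith
    _ = 6 * (i : ℝ) ^ (2 * (n : ℝ) - 1 - 2 * θ)
          * ∑ p ∈ Finset.Icc 1 (i ^ 2), (p : ℝ) ^ (2 * θ - 2) := by
        rw [← Finset.mul_sum]; ring
    _ ≤ 6 * C₁ * (i : ℝ) ^ (2 * ((n : ℝ) - θ) - 1) := by
        rw [hE]
        have hpow : (0:ℝ) < (i : ℝ) ^ (2 * (n : ℝ) - 1 - 2 * θ) := Real.rpow_pos_of_pos hi0 _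
        nlinarith [htsum, hpow]
end

section
/- Let θ be a real number with 0 ≤ θ < 1/2. Then there exists a constant C > 0 such that for every integer i ≥ 2, ∑ ((p+q)/(p·q))^{1−2θ} ≤ C · i, where the sum ranges over all pairs of integers (p, q) with p ≥ 1, q ≥ 1 and (i−1)² ≤ 2pq ≤ i². -/
set_option maxHeartbeats 1600000 in
/-- For `0 ≤ θ < 1/2` there is a constant `C > 0` such that for every integer `i ≥ 2`,
`∑ ((p+q)/(pq))^{1-2θ} ≤ C i`, the sum being over all pairs of integers `p, q ≥ 1`
with `(i-1)² ≤ 2pq ≤ i²`. -/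
theorem hyperbolic_sum_bound (θ : ℝ) (hθ0 : 0 ≤ θ) (hθ1 : θ < 1 / 2) :
    ∃ C : ℝ, 0 < C ∧ ∀ i : ℕ, 2 ≤ i →
      ∑ pq ∈ (Finset.Icc 1 (i ^ 2) ×ˢ Finset.Icc 1 (i ^ 2)).filter
          (fun pq => (i - 1) ^ 2 ≤ 2 * pq.1 * pq.2 ∧ 2 * pq.1 * pq.2 ≤ i ^ 2),
        (((pq.1 : ℝ) + (pq.2 : ℝ)) / ((pq.1 : ℝ) * (pq.2 : ℝ))) ^ (1 - 2 * θ)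
      ≤ C * (i : ℝ) := by
  set α : ℝ := 1 - 2 * θ with hαdef
  have hα0 : 0 < α := by rw [hαdef]; linarith
  have hα1 : α ≤ 1 := by rw [hαdef]; linarith
  clear_value α
  have hsum : Summable (fun n : ℕ => (n : ℝ) ^ (-(1 + α))) :=
    Real.summable_nat_rpow.2 (by linarith)
  set K := ∑' n : ℕ, (n : ℝ) ^ (-(1 + α)) with hKdef
  have hK0 : 0 ≤ K := tsum_nonneg fun n => Real.rpow_nonneg (Nat.cast_nonneg n) _
  have hKle : ∀ s : Finset ℕ, ∑ p ∈ s, (p : ℝ) ^ (-(1 + α)) ≤ K :=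
    fun s => Summable.sum_le_tsum s (fun n _ => Real.rpow_nonneg (Nat.cast_nonneg n) _) hsum
  clear_value K
  have h2α : (0:ℝ) < 2 ^ α := Real.rpow_pos_of_pos (by norm_num) _
  refine ⟨2 * 2 ^ α * (K + 2), by positivity, ?_⟩
  intro i hi
  have hi1 : 1 ≤ i := by omega
  set S : Finset (ℕ × ℕ) := (Finset.Icc 1 (i ^ 2) ×ˢ Finset.Icc 1 (i ^ 2)).filter
      (fun pq => (i - 1) ^ 2 ≤ 2 * pq.1 * pq.2 ∧ 2 * pq.1 * pq.2 ≤ i ^ 2) with hSdef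
  set T : Finset (ℕ × ℕ) := S.filter (fun pq => pq.1 ≤ pq.2) with hTdef
  set f : ℕ × ℕ → ℝ := fun pq => (((pq.1 : ℝ) + (pq.2 : ℝ)) / ((pq.1 : ℝ) * (pq.2 : ℝ))) ^ α
    with hfdef
  have hf0 : ∀ pq : ℕ × ℕ, 0 ≤ f pq := fun pq => by
    rw [hfdef]; exact Real.rpow_nonneg (by positivity) _
  clear_value S T f
  -- Step A : symmetry
  have hswap : ∑ pq ∈ S.filter (fun pq => pq.2 ≤ pq.1), f pq = ∑ pq ∈ T, f pq := by
    refine Finset.sum_nbij' Prod.swap Prod.swap ?_ ?_ (fun a _ => Prod.swap_swap a)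
      (fun a _ => Prod.swap_swap a) ?_
    · intro a ha
      simp only [hTdef, hSdef, Finset.mem_filter, Finset.mem_product, Prod.fst_swap,
        Prod.snd_swap] at ha ⊢
      refine ⟨⟨⟨ha.1.1.2, ha.1.1.1⟩, ?_, ?_⟩, ha.2⟩
      · rw [mul_right_comm]; exact ha.1.2.1
      · rw [mul_right_comm]; exact ha.1.2.2
    · intro a ha
      simp only [hTdef, hSdef, Finset.mem_filter, Finset.mem_product, Prod.fst_swap,
        Prod.snd_swap] at ha ⊢
      refine ⟨⟨⟨ha.1.1.2, ha.1.1.1⟩, ?_, ?_⟩, ha.2⟩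
      · rw [mul_right_comm]; exact ha.1.2.1
      · rw [mul_right_comm]; exact ha.1.2.2
    · intro a _
      simp only [hfdef, Prod.fst_swap, Prod.snd_swap]
      rw [add_comm, mul_comm]
  have stepA : ∑ pq ∈ S, f pq ≤ 2 * ∑ pq ∈ T, f pq := by
    have h1 : ∑ pq ∈ S.filter (fun pq => ¬ pq.1 ≤ pq.2), f pq ≤ ∑ pq ∈ T, f pq := by
      rw [← hswap]
      refine Finset.sum_le_sum_of_subset_of_nonneg ?_ (fun pq _ _ => hf0 pq)
      exact Finset.monotone_filter_right S (fun a _ ha => le_of_not_ge ha)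
    have h2 := Finset.sum_filter_add_sum_filter_not S (fun pq => pq.1 ≤ pq.2) f
    rw [← hTdef] at h2
    linarith
  -- Step B : pointwise bound
  have stepB : ∑ pq ∈ T, f pq ≤ ∑ pq ∈ T, (2 / (pq.1 : ℝ)) ^ α := by
    refine Finset.sum_le_sum fun pq hpq => ?_
    simp only [hfdef]
    simp only [hTdef, hSdef, Finset.mem_filter, Finset.mem_product, Finset.mem_Icc] at hpq
    have hp1 : (1:ℝ) ≤ pq.1 := by exact_mod_cast hpq.1.1.1.1
    have hq1 : (1:ℝ) ≤ pq.2 := by exact_mod_cast hpq.1.1.2.1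
    have hle : (pq.1:ℝ) ≤ pq.2 := by exact_mod_cast hpq.2
    refine Real.rpow_le_rpow (by positivity) ?_ hα0.le
    rw [div_le_div_iff₀ (by positivity) (by positivity)]
    nlinarith
  -- Step C : sum over product as iterated sum
  have stepC : ∑ pq ∈ T, (2 / (pq.1 : ℝ)) ^ α
      = ∑ p ∈ Finset.Icc 1 (i ^ 2),
          (((Finset.Icc 1 (i ^ 2)).filter (fun q =>
            (((i - 1) ^ 2 ≤ 2 * p * q ∧ 2 * p * q ≤ i ^ 2) ∧ p ≤ q))).card : ℝ)
            * (2 / (p : ℝ)) ^ α := by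
    have e : ∀ p : ℕ, ∑ _q ∈ (Finset.Icc 1 (i ^ 2)).filter (fun q =>
        (((i - 1) ^ 2 ≤ 2 * p * q ∧ 2 * p * q ≤ i ^ 2) ∧ p ≤ q)), (2 / (p : ℝ)) ^ α
        = (((Finset.Icc 1 (i ^ 2)).filter (fun q =>
            (((i - 1) ^ 2 ≤ 2 * p * q ∧ 2 * p * q ≤ i ^ 2) ∧ p ≤ q))).card : ℝ)
            * (2 / (p : ℝ)) ^ α := by
      intro p
      rw [Finset.sum_const, nsmul_eq_mul]
    rw [hTdef, hSdef, Finset.filter_filter, Finset.sum_filter, Finset.sum_product]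
    refine Finset.sum_congr rfl fun p _ => ?_
    rw [← Finset.sum_filter]
    exact e p
  -- card bounds
  have hQempty : ∀ p, i < p → ((Finset.Icc 1 (i ^ 2)).filter (fun q =>
      (((i - 1) ^ 2 ≤ 2 * p * q ∧ 2 * p * q ≤ i ^ 2) ∧ p ≤ q))) = ∅ := by
    intro p hp
    rw [Finset.eq_empty_iff_forall_notMem]
    intro q hq
    simp only [Finset.mem_filter, Finset.mem_Icc] at hq
    obtain ⟨⟨hq1, hq2⟩, ⟨h1, h2⟩, h3⟩ := hq
    have : i ^ 2 < 2 * p * q := by nlinarith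
    omega
  have hQcard : ∀ p ∈ Finset.Icc 1 i, (((Finset.Icc 1 (i ^ 2)).filter (fun q =>
      (((i - 1) ^ 2 ≤ 2 * p * q ∧ 2 * p * q ≤ i ^ 2) ∧ p ≤ q))).card : ℝ)
      ≤ (i : ℝ) / (p : ℝ) + 2 := by
    intro p hp
    rw [Finset.mem_Icc] at hp
    have hp0 : (0:ℝ) < p := by exact_mod_cast hp.1
    have h2p : 0 < 2 * p := by omega
    set a := (i - 1) ^ 2 / (2 * p) with hadef
    set b := i ^ 2 / (2 * p) with hbdef
    clear_value a b
    have hsub : ((Finset.Icc 1 (i ^ 2)).filter (fun q =>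
        (((i - 1) ^ 2 ≤ 2 * p * q ∧ 2 * p * q ≤ i ^ 2) ∧ p ≤ q))) ⊆ Finset.Icc a b := by
      intro q hq
      simp only [Finset.mem_filter, Finset.mem_Icc] at hq ⊢
      obtain ⟨⟨hq1, hq2⟩, ⟨h1, h2⟩, h3⟩ := hq
      constructor
      · rw [hadef]
        calc (i - 1) ^ 2 / (2 * p) ≤ 2 * p * q / (2 * p) := Nat.div_le_div_right h1
          _ = q := Nat.mul_div_cancel_left q h2p
      · rw [hbdef]
        exact Nat.le_div_iff_mul_le h2p |>.2 (by rw [mul_comm]; exact h2)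
    have hcard : ((Finset.Icc 1 (i ^ 2)).filter (fun q =>
        (((i - 1) ^ 2 ≤ 2 * p * q ∧ 2 * p * q ≤ i ^ 2) ∧ p ≤ q))).card ≤ b + 1 - a :=
      (Finset.card_le_card hsub).trans (Nat.card_Icc a b).le
    have hbR : (b : ℝ) ≤ (i:ℝ) ^ 2 / (2 * p) := by
      rw [hbdef]
      calc ((i ^ 2 / (2 * p) : ℕ):ℝ) ≤ ((i ^ 2 : ℕ) : ℝ) / ((2 * p : ℕ) : ℝ) := Nat.cast_div_le
        _ = (i:ℝ) ^ 2 / (2 * p) := by push_cast; ring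
    have haR : ((i:ℝ) - 1) ^ 2 / (2 * p) - 1 ≤ (a : ℝ) := by
      have h1 : (i - 1) ^ 2 < 2 * p * (a + 1) := by
        rw [hadef]
        calc (i - 1) ^ 2 = 2 * p * ((i - 1) ^ 2 / (2 * p)) + (i - 1) ^ 2 % (2 * p) :=
              (Nat.div_add_mod _ _).symm
          _ < 2 * p * ((i - 1) ^ 2 / (2 * p)) + 2 * p := Nat.add_lt_add_left (Nat.mod_lt _ h2p) _
          _ = 2 * p * ((i - 1) ^ 2 / (2 * p) + 1) := by ring
      have hcast : ((i - 1 : ℕ) : ℝ) = (i : ℝ) - 1 := by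
        rw [Nat.cast_sub hi1]; norm_num
      have h2 : (((i:ℝ) - 1)) ^ 2 < 2 * p * ((a:ℝ) + 1) := by
        have h1' : (((i - 1) ^ 2 : ℕ) : ℝ) < ((2 * p * (a + 1) : ℕ) : ℝ) := by
          exact_mod_cast h1
        push_cast at h1'
        rw [hcast] at h1'
        exact h1'
      rw [sub_le_iff_le_add, div_le_iff₀ (by positivity)]
      nlinarith
    rcases le_or_gt a (b + 1) with h | h
    · have hcR : (((Finset.Icc 1 (i ^ 2)).filter (fun q =>
          (((i - 1) ^ 2 ≤ 2 * p * q ∧ 2 * p * q ≤ i ^ 2) ∧ p ≤ q))).card : ℝ)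
          ≤ (b : ℝ) + 1 - (a : ℝ) := by
        rw [show ((b:ℝ) + 1 - a) = ((b + 1 - a : ℕ) : ℝ) by
          rw [Nat.cast_sub h]; push_cast; ring]
        exact_mod_cast hcard
      have hiR : (2:ℝ) ≤ i := by exact_mod_cast hi
      have key : (i:ℝ)^2 / (2*p) + 1 - (((i:ℝ) - 1)^2/(2*p) - 1) ≤ (i:ℝ)/p + 2 := by
        have hd : ((i:ℝ)^2 - ((i:ℝ)-1)^2) / (2*p) ≤ (i:ℝ)/p := by
          rw [div_le_div_iff₀ (by positivity) (by positivity)]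
          nlinarith
        rw [← div_sub_div_same] at hd
        linarith
      linarith [hcR, hbR, haR, key]
    · have : b + 1 - a = 0 := by omega
      have : ((Finset.Icc 1 (i ^ 2)).filter (fun q =>
          (((i - 1) ^ 2 ≤ 2 * p * q ∧ 2 * p * q ≤ i ^ 2) ∧ p ≤ q))).card = 0 := by omega
      rw [this]
      push_cast
      positivity
  -- Step D
  have stepD : ∑ p ∈ Finset.Icc 1 (i ^ 2),
      (((Finset.Icc 1 (i ^ 2)).filter (fun q =>
        (((i - 1) ^ 2 ≤ 2 * p * q ∧ 2 * p * q ≤ i ^ 2) ∧ p ≤ q))).card : ℝ)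
        * (2 / (p : ℝ)) ^ α
      ≤ ∑ p ∈ Finset.Icc 1 i, ((i : ℝ) / p + 2) * (2 / (p : ℝ)) ^ α := by
    rw [← Finset.sum_subset (Finset.Icc_subset_Icc_right (Nat.le_self_pow two_ne_zero i))
      (fun p _ hp => ?_)]
    · refine Finset.sum_le_sum fun p hp => ?_
      have := hQcard p hp
      have h2 : (0:ℝ) ≤ (2 / (p:ℝ)) ^ α := Real.rpow_nonneg (by positivity) _
      exact mul_le_mul_of_nonneg_right this h2
    · rw [hQempty p (by simp [Finset.mem_Icc] at *; omega)]
      simp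
  -- Step E
  have hcardIcc : (Finset.Icc 1 i).card = i := by rw [Nat.card_Icc]; omega
  have stepE : ∑ p ∈ Finset.Icc 1 i, ((i : ℝ) / p + 2) * (2 / (p : ℝ)) ^ α
      ≤ 2 ^ α * (K + 2) * i := by
    have hterm : ∀ p ∈ Finset.Icc 1 i,
        ((i : ℝ) / p + 2) * (2 / (p : ℝ)) ^ α
          ≤ 2 ^ α * ((i : ℝ) * (p : ℝ) ^ (-(1 + α)) + 2) := by
      intro p hp
      rw [Finset.mem_Icc] at hp
      have hp1 : (1:ℝ) ≤ p := by exact_mod_cast hp.1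
      have hp0 : (0:ℝ) < p := by linarith
      have hpα : (0:ℝ) < (p:ℝ) ^ α := Real.rpow_pos_of_pos hp0 _
      have e1 : (2 / (p:ℝ)) ^ α = 2 ^ α / (p:ℝ) ^ α := Real.div_rpow (by norm_num) hp0.le α
      have e2 : (p : ℝ) ^ (-(1 + α)) = 1 / ((p:ℝ) * (p:ℝ) ^ α) := by
        rw [Real.rpow_neg hp0.le, Real.rpow_add hp0, Real.rpow_one, one_div]
      have e3 : (1:ℝ) ≤ (p:ℝ) ^ α := Real.one_le_rpow hp1 hα0.le
      rw [e1, e2]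
      have heq : ((i:ℝ)/p + 2) * (2 ^ α / (p:ℝ)^α)
          = 2 ^ α * ((i:ℝ) * (1 / ((p:ℝ) * (p:ℝ)^α)) + 2 / (p:ℝ)^α) := by
        field_simp
      rw [heq]
      have h4 : 2 / (p:ℝ)^α ≤ 2 := div_le_self (by norm_num) e3
      have h5 : (0:ℝ) ≤ (i:ℝ) * (1 / ((p:ℝ) * (p:ℝ)^α)) := by positivity
      nlinarith
    calc ∑ p ∈ Finset.Icc 1 i, ((i : ℝ) / p + 2) * (2 / (p : ℝ)) ^ α
        ≤ ∑ p ∈ Finset.Icc 1 i, 2 ^ α * ((i : ℝ) * (p : ℝ) ^ (-(1 + α)) + 2) :=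
          Finset.sum_le_sum hterm
      _ = 2 ^ α * ((i:ℝ) * ∑ p ∈ Finset.Icc 1 i, (p : ℝ) ^ (-(1 + α)) + 2 * i) := by
          rw [← Finset.mul_sum, Finset.sum_add_distrib, Finset.sum_const, ← Finset.mul_sum,
            hcardIcc, nsmul_eq_mul]
          ring
      _ ≤ 2 ^ α * ((i:ℝ) * K + 2 * i) := by
          exact mul_le_mul_of_nonneg_left (add_le_add
            (mul_le_mul_of_nonneg_left (hKle (Finset.Icc 1 i)) (Nat.cast_nonneg i)) le_rfl) h2α.le
      _ = 2 ^ α * (K + 2) * i := by ring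
  calc ∑ pq ∈ S, f pq ≤ 2 * ∑ pq ∈ T, f pq := stepA
    _ ≤ 2 * ∑ pq ∈ T, (2 / (pq.1 : ℝ)) ^ α := by linarith [stepB]
    _ ≤ 2 * (2 ^ α * (K + 2) * i) := by rw [stepC]; linarith [stepD, stepE]
    _ = 2 * 2 ^ α * (K + 2) * i := by ring
end

section
/- There exist constants c, C > 0 such that for every integer i ≥ 2, c · i · log i ≤ card{(p, q) ∈ ℤ² : p ≥ 1, q ≥ 1, (i−1)² ≤ 2pq ≤ i²} ≤ C · i · log i; that is, the number of integer points lying between the two hyperbolae 2pq = (i−1)² and 2pq = i² in the positive quadrant is of the order of i·log i. -/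
lemma ediv_real_le (a b : ℤ) (hb : 0 < b) : ((a / b : ℤ) : ℝ) ≤ (a : ℝ) / (b : ℝ) := by
  have hbR : (0:ℝ) < (b:ℝ) := by exact_mod_cast hb
  rw [le_div_iff₀ hbR]
  have h1 : b * (a / b) ≤ a := by
    have := Int.mul_ediv_add_emod a b
    have := Int.emod_nonneg a (ne_of_gt hb)
    linarith
  have : ((b * (a / b) : ℤ) : ℝ) ≤ (a : ℝ) := by exact_mod_cast h1
  push_cast at this
  linarith

lemma ediv_real_gt (a b : ℤ) (hb : 0 < b) : (a : ℝ) / (b : ℝ) - 1 < ((a / b : ℤ) : ℝ) := by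
  have hbR : (0:ℝ) < (b:ℝ) := by exact_mod_cast hb
  have h1 : a < (a / b + 1) * b := Int.lt_ediv_add_one_mul_self a hb
  have h2 : (a : ℝ) < (((a / b : ℤ) : ℝ) + 1) * (b : ℝ) := by exact_mod_cast h1
  rw [sub_lt_iff_lt_add, div_lt_iff₀ hbR]
  linarith

lemma sum_Icc_int_eq (f : ℝ → ℝ) (m : ℤ) (hm : 0 ≤ m) :
    ∑ p ∈ Finset.Icc (1:ℤ) m, f (p : ℝ) = ∑ p ∈ Finset.Icc (1:ℕ) m.toNat, f (p : ℝ) := by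
  apply Finset.sum_nbij' (i := Int.toNat) (j := (Nat.cast : ℕ → ℤ))
  · intro p hp
    simp only [Finset.mem_Icc] at *
    omega
  · intro p hp
    simp only [Finset.mem_Icc] at *
    omega
  · intro p hp
    simp only [Finset.mem_Icc] at hp
    omega
  · intro p hp; simp
  · intro p hp
    simp only [Finset.mem_Icc] at hp
    congr 1
    exact_mod_cast (Int.toNat_of_nonneg (by omega : (0:ℤ) ≤ p)).symm

lemma harmonic_eq_sum (n : ℕ) :
    ((harmonic n : ℚ) : ℝ) = ∑ p ∈ Finset.Icc (1:ℕ) n, 1 / (p : ℝ) := by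
  rw [harmonic]
  push_cast
  rw [show Finset.Icc 1 n = Finset.Ico 1 (n+1) by rw [Finset.Ico_add_one_right_eq_Icc]]
  rw [Finset.sum_Ico_eq_sum_range]
  simp [one_div, add_comm]

lemma log_le_sum_inv (n : ℕ) :
    Real.log (n + 1) ≤ ∑ p ∈ Finset.Icc (1:ℕ) n, 1 / (p : ℝ) := by
  rw [← harmonic_eq_sum]
  have := log_add_one_le_harmonic n
  push_cast at this ⊢
  linarith

lemma sum_inv_le_log (n : ℕ) :
    ∑ p ∈ Finset.Icc (1:ℕ) n, 1 / (p : ℝ) ≤ 1 + Real.log n := by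
  rw [← harmonic_eq_sum]
  exact harmonic_le_one_add_log n

lemma inner_eq (i p : ℤ) (hi : 2 ≤ i) (hp : 1 ≤ p) :
    (Finset.Icc (1:ℤ) (i^2)).filter (fun q => (i-1)^2 ≤ 2*p*q ∧ 2*p*q ≤ i^2)
    = Finset.Icc (((i-1)^2-1)/(2*p) + 1) (i^2/(2*p)) := by
  have h2p : (0:ℤ) < 2*p := by linarith
  have hnum : (0:ℤ) ≤ (i-1)^2 - 1 := by nlinarith
  ext q
  simp only [Finset.mem_filter, Finset.mem_Icc]
  constructor
  · rintro ⟨⟨h1, h2⟩, h3, h4⟩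
    refine ⟨?_, ?_⟩
    · have : ((i-1)^2-1)/(2*p) < q := by
        rw [Int.ediv_lt_iff_lt_mul h2p]; nlinarith
      omega
    · rw [Int.le_ediv_iff_mul_le h2p]; nlinarith
  · rintro ⟨hL, hU⟩
    have hq1 : 1 ≤ q := by
      have := Int.ediv_nonneg hnum (le_of_lt h2p)
      omega
    have hlow : (i-1)^2 ≤ 2*p*q := by
      have : ((i-1)^2-1)/(2*p) < q := by omega
      rw [Int.ediv_lt_iff_lt_mul h2p] at this
      nlinarith
    have hup : 2*p*q ≤ i^2 := by
      have := (Int.le_ediv_iff_mul_le h2p).mp hU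
      nlinarith
    have hqi : q ≤ i^2 := le_trans hU (Int.ediv_le_self _ (by positivity))
    exact ⟨⟨hq1, hqi⟩, hlow, hup⟩

lemma card_filterP (i : ℤ) (hi : 2 ≤ i) (P : Finset ℤ) (hP : ∀ p ∈ P, 1 ≤ p) :
    ((P ×ˢ Finset.Icc (1:ℤ) (i^2)).filter
        (fun pq => (i-1)^2 ≤ 2*pq.1*pq.2 ∧ 2*pq.1*pq.2 ≤ i^2)).card
    = ∑ p ∈ P, (i^2/(2*p) - ((i-1)^2-1)/(2*p)).toNat := by
  rw [Finset.card_eq_sum_card_fiberwise (f := Prod.fst) (t := P)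
    (fun pq hpq => (Finset.mem_product.mp (Finset.mem_filter.mp hpq).1).1)]
  refine Finset.sum_congr rfl fun p hp => ?_
  have hp1 : 1 ≤ p := hP p hp
  have key : ((P ×ˢ Finset.Icc (1:ℤ) (i^2)).filter
        (fun pq => (i-1)^2 ≤ 2*pq.1*pq.2 ∧ 2*pq.1*pq.2 ≤ i^2)).filter (fun pq => pq.1 = p)
      = (Finset.Icc (((i-1)^2-1)/(2*p) + 1) (i^2/(2*p))).map
          ⟨fun q => (p, q), fun a b h => by simpa using h⟩ := by
    rw [← inner_eq i p hi hp1]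
    ext ⟨a, b⟩
    simp only [Finset.mem_filter, Finset.mem_product, Finset.mem_Icc, Finset.mem_map,
      Function.Embedding.coeFn_mk, Prod.mk.injEq]
    constructor
    · rintro ⟨⟨⟨_, hb⟩, hpred⟩, rfl⟩
      exact ⟨b, ⟨hb, by simpa using hpred⟩, rfl⟩
    · rintro ⟨q, ⟨hq, hpred⟩, rfl, rfl⟩
      exact ⟨⟨⟨hp, hq⟩, by simpa using hpred⟩, rfl⟩
  rw [key, Finset.card_map, Int.card_Icc]
  congr 1
  ring

set_option maxHeartbeats 2000000 in
/-- The number of integer points in the positive quadrant lying between the hyperbolae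
`2pq = (i-1)²` and `2pq = i²` is of the order of `i·log i`. -/
theorem card_integer_points_between_hyperbolae_isBigO :
    ∃ c C : ℝ, 0 < c ∧ 0 < C ∧ ∀ i : ℤ, 2 ≤ i →
      c * (i : ℝ) * Real.log (i : ℝ)
          ≤ ({pq : ℤ × ℤ | 1 ≤ pq.1 ∧ 1 ≤ pq.2 ∧
              (i - 1) ^ 2 ≤ 2 * pq.1 * pq.2 ∧ 2 * pq.1 * pq.2 ≤ i ^ 2}.ncard : ℝ) ∧
        ({pq : ℤ × ℤ | 1 ≤ pq.1 ∧ 1 ≤ pq.2 ∧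
              (i - 1) ^ 2 ≤ 2 * pq.1 * pq.2 ∧ 2 * pq.1 * pq.2 ≤ i ^ 2}.ncard : ℝ)
          ≤ C * (i : ℝ) * Real.log (i : ℝ) := by
  refine ⟨1/4, 8, by norm_num, by norm_num, fun i hi => ?_⟩
  have hiR : (2:ℝ) ≤ (i:ℝ) := by exact_mod_cast hi
  have hiR0 : (0:ℝ) < (i:ℝ) := by linarith
  have hlog2 : Real.log 2 ≤ Real.log i := Real.log_le_log (by norm_num) hiR
  have hlog2pos : (0.6931471803:ℝ) < Real.log 2 := Real.log_two_gt_d9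
  have hlogipos : 0 < Real.log i := by linarith
  set F := (Finset.Icc (1:ℤ) (i^2) ×ˢ Finset.Icc (1:ℤ) (i^2)).filter
    (fun pq => (i-1)^2 ≤ 2*pq.1*pq.2 ∧ 2*pq.1*pq.2 ≤ i^2) with hF
  have hset : {pq : ℤ × ℤ | 1 ≤ pq.1 ∧ 1 ≤ pq.2 ∧
      (i - 1) ^ 2 ≤ 2 * pq.1 * pq.2 ∧ 2 * pq.1 * pq.2 ≤ i ^ 2} = ↑F := by
    ext ⟨p, q⟩
    simp only [Set.mem_setOf_eq, hF, Finset.coe_filter, Finset.mem_product, Finset.mem_Icc,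
      Set.mem_setOf_eq]
    constructor
    · rintro ⟨h1, h2, h3, h4⟩
      exact ⟨⟨⟨h1, by nlinarith⟩, h2, by nlinarith⟩, h3, h4⟩
    · rintro ⟨⟨⟨h1, _⟩, h2, _⟩, h3, h4⟩
      exact ⟨h1, h2, h3, h4⟩
  rw [hset, Set.ncard_coe_finset]
  have hFcard : F.card = ∑ p ∈ Finset.Icc (1:ℤ) (i^2),
      (i^2/(2*p) - ((i-1)^2-1)/(2*p)).toNat :=
    card_filterP i hi _ (fun p hp => (Finset.mem_Icc.mp hp).1)
  -- LOWER BOUND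
  set m := i / 2 with hm
  have h2m : i - 1 ≤ 2*m := by
    have := Int.lt_ediv_add_one_mul_self i (by norm_num : (0:ℤ) < 2)
    omega
  have hm1 : 1 ≤ m := by omega
  have hmi2 : m ≤ i^2 := by nlinarith [Int.ediv_le_self 2 (by linarith : (0:ℤ) ≤ i)]
  have hlower : (1/4 : ℝ) * i * Real.log i ≤ (F.card : ℝ) := by
    have step1 : ∑ p ∈ Finset.Icc (1:ℤ) m,
        (((i^2/(2*p) - ((i-1)^2-1)/(2*p)).toNat : ℕ) : ℝ) ≤ (F.card : ℝ) := by
      rw [hFcard]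
      push_cast
      exact Finset.sum_le_sum_of_subset_of_nonneg
        (Finset.Icc_subset_Icc le_rfl hmi2) (fun p _ _ => by positivity)
    have step2 : ∀ p ∈ Finset.Icc (1:ℤ) m,
        (i:ℝ)/(2*p) ≤ (((i^2/(2*p) - ((i-1)^2-1)/(2*p)).toNat : ℕ) : ℝ) := by
      intro p hp
      rw [Finset.mem_Icc] at hp
      have hp1 : (1:ℤ) ≤ p := hp.1
      have h2pi : 2*p ≤ i := by
        have := hp.2
        rw [hm, Int.le_ediv_iff_mul_le (by norm_num : (0:ℤ) < 2)] at this
        linarith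
      have h2p : (0:ℤ) < 2*p := by linarith
      have h2pR : (0:ℝ) < 2*(p:ℝ) := by
        have : (1:ℝ) ≤ (p:ℝ) := by exact_mod_cast hp1
        linarith
      have hU := ediv_real_gt (i^2) (2*p) h2p
      have hL := ediv_real_le ((i-1)^2-1) (2*p) h2p
      push_cast at hU hL
      have hcast : ((i^2/(2*p) - ((i-1)^2-1)/(2*p) : ℤ) : ℝ)
          ≤ (((i^2/(2*p) - ((i-1)^2-1)/(2*p)).toNat : ℕ) : ℝ) := by
        exact_mod_cast Int.self_le_toNat _
      push_cast at hcast
      have h2piR : 2*(p:ℝ) ≤ (i:ℝ) := by exact_mod_cast h2pi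
      have e1 : (i:ℝ)^2/(2*(p:ℝ))*(2*(p:ℝ)) = (i:ℝ)^2 := div_mul_cancel₀ _ (ne_of_gt h2pR)
      have e2 : (((i:ℝ)-1)^2-1)/(2*(p:ℝ))*(2*(p:ℝ)) = ((i:ℝ)-1)^2-1 :=
        div_mul_cancel₀ _ (ne_of_gt h2pR)
      have key : (i:ℝ)/(2*(p:ℝ)) ≤ (i:ℝ)^2/(2*(p:ℝ)) - 1 - (((i:ℝ)-1)^2-1)/(2*(p:ℝ)) := by
        rw [div_le_iff₀ h2pR]
        nlinarith
      push_cast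
      linarith
    have step3 : ∑ p ∈ Finset.Icc (1:ℤ) m, (i:ℝ)/(2*p)
        = ((i:ℝ)/2) * ∑ p ∈ Finset.Icc (1:ℤ) m, 1/(p:ℝ) := by
      rw [Finset.mul_sum]
      refine Finset.sum_congr rfl fun p hp => ?_
      rw [Finset.mem_Icc] at hp
      have hpR : ((p:ℝ)) ≠ 0 := by
        have : (1:ℝ) ≤ (p:ℝ) := by exact_mod_cast hp.1
        linarith
      rw [mul_one_div, div_div]
    have step4 : Real.log ((m:ℝ)+1) ≤ ∑ p ∈ Finset.Icc (1:ℤ) m, 1/(p:ℝ) := by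
      rw [show (fun p : ℤ => 1/(p:ℝ)) = fun p : ℤ => (fun x : ℝ => 1/x) (p:ℝ) from rfl]
      rw [sum_Icc_int_eq (fun x => 1/x) m (by omega)]
      have := log_le_sum_inv m.toNat
      have hmt : ((m.toNat : ℕ) : ℝ) = (m : ℝ) := by
        exact_mod_cast Int.toNat_of_nonneg (by omega : (0:ℤ) ≤ m)
      rw [hmt] at this
      exact this
    have step5 : Real.log i / 2 ≤ Real.log ((m:ℝ)+1) := by
      have hsqle : Real.sqrt i ≤ (m:ℝ)+1 := by
        have h1 : Real.sqrt i ≤ ((i:ℝ)+1)/2 := by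
          nlinarith [Real.sq_sqrt (le_of_lt hiR0), Real.sqrt_nonneg (i:ℝ)]
        have h2 : ((i:ℝ)+1)/2 ≤ (m:ℝ)+1 := by
          have : ((i:ℝ) - 1) ≤ 2*(m:ℝ) := by exact_mod_cast h2m
          linarith
        linarith
      have hsqpos : 0 < Real.sqrt i := Real.sqrt_pos.mpr hiR0
      calc Real.log i / 2 = Real.log (Real.sqrt i) := (Real.log_sqrt (le_of_lt hiR0)).symm
        _ ≤ Real.log ((m:ℝ)+1) := Real.log_le_log hsqpos hsqle
    calc (1/4 : ℝ) * i * Real.log i = ((i:ℝ)/2) * (Real.log i / 2) := by ring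
      _ ≤ ((i:ℝ)/2) * Real.log ((m:ℝ)+1) := by
          apply mul_le_mul_of_nonneg_left step5; linarith
      _ ≤ ((i:ℝ)/2) * ∑ p ∈ Finset.Icc (1:ℤ) m, 1/(p:ℝ) := by
          apply mul_le_mul_of_nonneg_left step4; linarith
      _ = ∑ p ∈ Finset.Icc (1:ℤ) m, (i:ℝ)/(2*p) := step3.symm
      _ ≤ (F.card : ℝ) := le_trans (Finset.sum_le_sum step2) step1
  -- UPPER BOUND
  have hupper : (F.card : ℝ) ≤ 8 * i * Real.log i := by
    set G := (Finset.Icc (1:ℤ) i ×ˢ Finset.Icc (1:ℤ) (i^2)).filter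
      (fun pq => (i-1)^2 ≤ 2*pq.1*pq.2 ∧ 2*pq.1*pq.2 ≤ i^2) with hG
    have hsplit : F.card ≤ G.card + G.card := by
      rw [← Finset.card_filter_add_card_filter_not (s := F)
        (p := fun pq => pq.1 ≤ i)]
      apply Nat.add_le_add
      · apply Finset.card_le_card
        intro ⟨a, b⟩ hab
        simp only [Finset.mem_filter, Finset.mem_product, Finset.mem_Icc, hF, hG] at *
        obtain ⟨⟨⟨⟨ha1, _⟩, hb⟩, hpred⟩, hai⟩ := hab
        exact ⟨⟨⟨ha1, hai⟩, hb⟩, hpred⟩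
      · apply Finset.card_le_card_of_injOn Prod.swap
        · intro ⟨a, b⟩ hab
          simp only [Finset.mem_filter, Finset.mem_product, Finset.mem_Icc, hF, hG,
            Prod.swap_prod_mk, not_le, Finset.mem_coe] at *
          obtain ⟨⟨⟨⟨ha1, ha2⟩, hb1, hb2⟩, hp1, hp2⟩, hai⟩ := hab
          have hbi : b ≤ i := by nlinarith
          exact ⟨⟨⟨hb1, hbi⟩, ha1, ha2⟩, by linarith [hp1, hp2], by nlinarith⟩
        · exact fun x _ y _ h => Prod.swap_injective h
    have hGcard : G.card = ∑ p ∈ Finset.Icc (1:ℤ) i,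
        (i^2/(2*p) - ((i-1)^2-1)/(2*p)).toNat :=
      card_filterP i hi _ (fun p hp => (Finset.mem_Icc.mp hp).1)
    have hterm : ∀ p ∈ Finset.Icc (1:ℤ) i,
        (((i^2/(2*p) - ((i-1)^2-1)/(2*p)).toNat : ℕ) : ℝ) ≤ (i:ℝ)/p + 1 := by
      intro p hp
      rw [Finset.mem_Icc] at hp
      have hp1 : (1:ℤ) ≤ p := hp.1
      have h2p : (0:ℤ) < 2*p := by linarith
      have hpR : (0:ℝ) < (p:ℝ) := by exact_mod_cast hp1.trans_lt' (by norm_num)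
      have h2pR : (0:ℝ) < 2*(p:ℝ) := by linarith
      have htnn : (0:ℤ) ≤ i^2/(2*p) - ((i-1)^2-1)/(2*p) := by
        have : ((i-1)^2-1)/(2*p) ≤ i^2/(2*p) := Int.ediv_le_ediv h2p (by nlinarith)
        omega
      have hcast : (((i^2/(2*p) - ((i-1)^2-1)/(2*p)).toNat : ℕ) : ℝ)
          = ((i^2/(2*p) - ((i-1)^2-1)/(2*p) : ℤ) : ℝ) := by
        exact_mod_cast congrArg (Int.cast : ℤ → ℝ) (Int.toNat_of_nonneg htnn)
      rw [hcast]
      have hU := ediv_real_le (i^2) (2*p) h2p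
      have hL := ediv_real_gt ((i-1)^2-1) (2*p) h2p
      push_cast at hU hL ⊢
      have e1 : (i:ℝ)^2/(2*(p:ℝ))*(2*(p:ℝ)) = (i:ℝ)^2 := div_mul_cancel₀ _ (ne_of_gt h2pR)
      have e2 : (((i:ℝ)-1)^2-1)/(2*(p:ℝ))*(2*(p:ℝ)) = ((i:ℝ)-1)^2-1 :=
        div_mul_cancel₀ _ (ne_of_gt h2pR)
      have e3 : (i:ℝ)/(p:ℝ)*(p:ℝ) = (i:ℝ) := div_mul_cancel₀ _ (ne_of_gt hpR)
      have key : (i:ℝ)^2/(2*(p:ℝ)) - ((((i:ℝ)-1)^2-1)/(2*(p:ℝ)) - 1) ≤ (i:ℝ)/(p:ℝ) + 1 := by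
        rw [← sub_nonneg]
        have expand : (i:ℝ)/(p:ℝ) + 1 - ((i:ℝ)^2/(2*(p:ℝ)) - ((((i:ℝ)-1)^2-1)/(2*(p:ℝ)) - 1))
            = ((i:ℝ)/(p:ℝ)*(p:ℝ) - ((i:ℝ)^2/(2*(p:ℝ))*(2*(p:ℝ)) - (((i:ℝ)-1)^2-1)/(2*(p:ℝ))*(2*(p:ℝ)))/2*(2/(2*(p:ℝ)))*(p:ℝ)) * (1/(p:ℝ)) := by
          field_simp
          ring
        rw [expand, e1, e2, e3]
        have : (i:ℝ) - ((i:ℝ)^2 - (((i:ℝ)-1)^2-1))/2*(2/(2*(p:ℝ)))*(p:ℝ) = 0 := by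
          field_simp
          ring
        rw [this]
        simp
      linarith
    have hsum : ∑ p ∈ Finset.Icc (1:ℤ) i, ((i:ℝ)/p + 1) ≤ (i:ℝ)*(1 + Real.log i) + (i:ℝ) := by
      rw [Finset.sum_add_distrib]
      have hc : ∑ p ∈ Finset.Icc (1:ℤ) i, (1:ℝ) = (i:ℝ) := by
        rw [Finset.sum_const, Int.card_Icc]
        simp only [nsmul_eq_mul, mul_one]
        have h1 : ((i+1-1).toNat : ℤ) = i := by omega
        exact_mod_cast h1
      rw [hc]
      gcongr
      have e : ∑ p ∈ Finset.Icc (1:ℤ) i, (i:ℝ)/p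
          = (i:ℝ) * ∑ p ∈ Finset.Icc (1:ℤ) i, 1/(p:ℝ) := by
        rw [Finset.mul_sum]
        exact Finset.sum_congr rfl fun p _ => by rw [mul_one_div]
      rw [e]
      have hs : ∑ p ∈ Finset.Icc (1:ℤ) i, 1/(p:ℝ) ≤ 1 + Real.log i := by
        rw [show (fun p : ℤ => 1/(p:ℝ)) = fun p : ℤ => (fun x : ℝ => 1/x) (p:ℝ) from rfl]
        rw [sum_Icc_int_eq (fun x => 1/x) i (by omega)]
        have := sum_inv_le_log i.toNat
        have hit : ((i.toNat : ℕ) : ℝ) = (i : ℝ) := by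
          exact_mod_cast Int.toNat_of_nonneg (by omega : (0:ℤ) ≤ i)
        rwa [hit] at this
      exact mul_le_mul_of_nonneg_left hs (le_of_lt hiR0)
    have hGreal : (G.card : ℝ) ≤ (i:ℝ)*(1 + Real.log i) + (i:ℝ) := by
      rw [hGcard]
      push_cast
      exact le_trans (Finset.sum_le_sum hterm) hsum
    have hFreal : (F.card : ℝ) ≤ (G.card : ℝ) + (G.card : ℝ) := by exact_mod_cast hsplit
    have h3 : (2:ℝ) ≤ 3 * Real.log i := by linarith
    have h4 : 4*(i:ℝ) ≤ 6*(i:ℝ)*Real.log i := by nlinarith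
    nlinarith
  exact ⟨hlower, hupper⟩
end
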